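/- arXiv:math/0611453 — 9 statements merged into one kernel-verified Lean document; each statement's English description precedes it below -/
import Mathlib

section
/- Let Γ be a group acting on a set Z, G₁ and G₂ subgroups of Γ, and J a subgroup of G₁ ∩ G₂. Suppose (X₁, X₂) is a proper interactive pair for (G₁, G₂, J). Then for every (m,k)-form of length n > 1 with value g = γ_n⋯γ_1, the inclusion g • X_k ⊆ X_{3−m} is strict, i.e. g • X_k is a proper subset of X_{3−m}. -/
open Pointwise

/-- `x` is a letter of factor `m`: it belongs to `G m` but not to `J`. -/
def NFLetter {Γ : Type*} [Group Γ] (G : Bool → Subgroup Γ) (J : Subgroup Γ)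
    (m : Bool) (x : Γ) : Prop :=
  x ∈ G m ∧ x ∉ J

/-- A normal form for `(G true, G false, J)`: a nonempty list of letters, written from the
last letter `γ_n` down to the first letter `γ_1`, each lying in `(G₁ ∖ J) ∪ (G₂ ∖ J)`,
such that consecutive letters lie in different factors. -/
def IsNormalForm {Γ : Type*} [Group Γ] (G : Bool → Subgroup Γ) (J : Subgroup Γ)
    (w : List Γ) : Prop :=
  w ≠ [] ∧ (∀ x ∈ w, NFLetter G J true x ∨ NFLetter G J false x) ∧
    w.Chain' (fun a b => ∀ m, NFLetter G J m b → NFLetter G J (!m) a)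

/-- An `(m, k)`-form: a normal form whose last letter `γ_n` (head of the list) lies in
`G m ∖ J` and whose first letter `γ_1` (last entry of the list) lies in `G k ∖ J`. -/
def IsMKForm {Γ : Type*} [Group Γ] (G : Bool → Subgroup Γ) (J : Subgroup Γ)
    (m k : Bool) (w : List Γ) : Prop :=
  IsNormalForm G J w ∧
    ∃ h : w ≠ [], NFLetter G J m (w.head h) ∧ NFLetter G J k (w.getLast h)

/-- `(X true, X false)` is an interactive pair for `(G true, G false, J)`. -/
def IsInteractivePair {Γ : Type*} [Group Γ] {Z : Type*} [MulAction Γ Z]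
    (G : Bool → Subgroup Γ) (J : Subgroup Γ) (X : Bool → Set Z) : Prop :=
  (∀ m, (X m).Nonempty) ∧ Disjoint (X true) (X false) ∧
    (∀ m, ∀ j ∈ J, j • X m = X m) ∧
    (∀ m, ∀ g : Γ, NFLetter G J m g → g • X m ⊆ X (!m))

/-- The interactive pair `(X true, X false)` is proper: some point of one of the sets is not
contained in any translate of the other set by the corresponding group. -/
def IsProperInteractivePair {Γ : Type*} [Group Γ] {Z : Type*} [MulAction Γ Z]
    (G : Bool → Subgroup Γ) (J : Subgroup Γ) (X : Bool → Set Z) : Prop :=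
  IsInteractivePair G J X ∧
    ∃ m, ∃ x ∈ X m, ∀ g ∈ G (!m), x ∉ g • X (!m)

section Aux

variable {Γ : Type*} [Group Γ] {Z : Type*} [MulAction Γ Z]
  {G : Bool → Subgroup Γ} {J : Subgroup Γ} {X : Bool → Set Z}

lemma unique_factor (hX : IsProperInteractivePair G J X)
    {t : Γ} {p q : Bool} (hp : NFLetter G J p t) (hq : NFLetter G J q t) : p = q := by
  by_contra hne
  obtain ⟨⟨hne', hdisj, hJinv, hmove⟩, m₀, x, hx, hxp⟩ := hX
  have h1 : NFLetter G J m₀ t := by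
    cases p <;> cases q <;> cases m₀ <;> simp_all [NFLetter]
  have h2 : t ∈ G (!m₀) := by
    cases p <;> cases q <;> cases m₀ <;> simp_all [NFLetter]
  have hx1 : t • x ∈ X (!m₀) := hmove m₀ t h1 (Set.smul_mem_smul_set hx)
  exact hxp t⁻¹ (inv_mem h2) (by rw [Set.mem_inv_smul_set_iff]; simpa using hx1)

lemma tail_form (hX : IsProperInteractivePair G J X) {m k : Bool} {a b : Γ} {t : List Γ}
    (h : IsMKForm G J m k (a :: b :: t)) :
    NFLetter G J m a ∧ IsMKForm G J (!m) k (b :: t) := by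
  obtain ⟨⟨_, hlet, hchain⟩, _, hhead, hlast⟩ := h
  simp only [List.head_cons] at hhead
  unfold List.Chain' at hchain; rw [List.isChain_cons_cons] at hchain
  obtain ⟨hrab, hchain'⟩ := hchain
  have hb : NFLetter G J (!m) b := by
    rcases hlet b (by simp) with hq | hq
    · have h := unique_factor hX hhead (hrab true hq)
      have h2 : (!m) = true := by rw [h]; simp
      rwa [h2]
    · have h := unique_factor hX hhead (hrab false hq)
      have h2 : (!m) = false := by rw [h]; simp
      rwa [h2]
  refine ⟨hhead, ⟨⟨by simp, fun x hx => hlet x (by simp [hx]), hchain'⟩,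
    by simp, by simpa using hb, ?_⟩⟩
  rw [List.getLast_cons (by simp)] at hlast
  exact hlast

lemma lemA (hX : IsProperInteractivePair G J X) :
    ∀ (w : List Γ) (m k : Bool), IsMKForm G J m k w → w.prod • X k ⊆ X (!m) := by
  intro w
  induction w with
  | nil => exact fun m k h => absurd rfl h.1.1
  | cons a l ih =>
    intro m k h
    obtain ⟨hIP, hm₀⟩ := hX
    obtain ⟨hne', hdisj, hJinv, hmove⟩ := hIP
    cases l with
    | nil =>
      obtain ⟨_, _, hhead, hlast⟩ := h
      simp only [List.head_cons, List.getLast_singleton] at hhead hlast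
      have hmk : m = k := unique_factor ⟨⟨hne', hdisj, hJinv, hmove⟩, hm₀⟩ hhead hlast
      subst hmk
      simpa using hmove m a hhead
    | cons b t =>
      obtain ⟨ha, hf⟩ := tail_form ⟨⟨hne', hdisj, hJinv, hmove⟩, hm₀⟩ h
      have h1 := ih (!m) k hf
      rw [List.prod_cons, mul_smul]
      calc a • (b :: t).prod • X k ⊆ a • X (!!m) := Set.smul_set_mono h1
        _ = a • X m := by simp
        _ ⊆ X (!m) := hmove m a ha

lemma lemB (hX : IsProperInteractivePair G J X) :
    ∀ (w : List Γ) (m k : Bool), IsMKForm G J m k w → w.prod • X k = X (!m) →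
      ∀ t ∈ w, ∀ p, NFLetter G J p t → t • X p = X (!p) := by
  intro w
  induction w with
  | nil => exact fun m k h => absurd rfl h.1.1
  | cons a l ih =>
    intro m k h heq
    have hmove := hX.1.2.2.2
    cases l with
    | nil =>
      obtain ⟨_, _, hhead, hlast⟩ := h
      simp only [List.head_cons, List.getLast_singleton] at hhead hlast
      have hmk : m = k := unique_factor hX hhead hlast
      subst hmk
      intro t ht p hp
      simp only [List.mem_singleton] at ht
      subst ht
      have hpm : p = m := unique_factor hX hp hhead
      subst hpm
      simpa using heq
    | cons b t =>
      obtain ⟨ha, hf⟩ := tail_form hX h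
      have hS : (b :: t).prod • X k ⊆ X m := by simpa using lemA hX (b :: t) (!m) k hf
      rw [List.prod_cons, mul_smul] at heq
      have h3 : a • (b :: t).prod • X k ⊆ a • X m := Set.smul_set_mono hS
      have haX : a • X m = X (!m) :=
        subset_antisymm (hmove m a ha) (heq ▸ h3)
      have hSeq : a • (b :: t).prod • X k = a • X m := by rw [heq, haX]
      have hS2 : (b :: t).prod • X k = X (!!m) := by
        have := congrArg (fun s => a⁻¹ • s) hSeq
        simpa [inv_smul_smul] using this
      intro x hx p hp
      rcases List.mem_cons.mp hx with rfl | hx'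
      · have hpm : p = m := unique_factor hX hp ha
        subst hpm; exact haX
      · exact ih (!m) k hf hS2 x hx' p hp

end Aux

theorem stmt2 {Γ : Type*} [Group Γ] {Z : Type*} [MulAction Γ Z]
    (G : Bool → Subgroup Γ) (J : Subgroup Γ) (hJ : ∀ m, J ≤ G m)
    (X : Bool → Set Z) (hX : IsProperInteractivePair G J X) :
    ∀ (m k : Bool) (w : List Γ), IsMKForm G J m k w → 1 < w.length →
      w.prod • X k ⊂ X (!m) := by
  intro m k w hw hlen
  have hsub := lemA hX w m k hw
  refine ⟨hsub, fun hsup => ?_⟩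
  have heq : w.prod • X k = X (!m) := subset_antisymm hsub hsup
  have hall := lemB hX w m k hw heq
  match w, hlen, hw, hall with
  | a :: b :: t, _, hw, hall =>
    obtain ⟨ha, hf⟩ := tail_form hX hw
    have hb : NFLetter G J (!m) b := by
      obtain ⟨_, _, hh, _⟩ := hf
      simpa using hh
    obtain ⟨_, m₀, x, hx, hxp⟩ := hX
    have key : ∃ γ ∈ (a :: b :: t), NFLetter G J (!m₀) γ := by
      rcases Bool.eq_or_eq_not (!m₀) m with hpm | hpm
      · exact ⟨a, by simp, hpm ▸ ha⟩
      · exact ⟨b, by simp, hpm ▸ hb⟩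
    obtain ⟨γ, hγmem, hγ⟩ := key
    have hγeq : γ • X (!m₀) = X m₀ := by simpa using hall γ hγmem (!m₀) hγ
    exact hxp γ hγ.1 (hγeq ▸ hx)
end

section
/- Let Γ be a group acting on a set Z, G₁ and G₂ subgroups of Γ, and J a subgroup of G₁ ∩ G₂. If there exists a proper interactive pair (X₁, X₂) for (G₁, G₂, J), then the canonical homomorphism Φ : G₁ *_J G₂ → Γ induced by the inclusions of G₁ and G₂ into Γ is injective; equivalently, the value γ_n⋯γ_1 of every normal form is not the identity of Γ, so the subgroup generated by G₁ and G₂ is isomorphic to the amalgamated free product G₁ *_J G₂. -/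
open Pointwise

/-- The canonical homomorphism from the amalgamated free product `G₁ *_J G₂` to `Γ`
induced by the inclusion homomorphisms of `G₁` and `G₂` into `Γ`. -/
noncomputable def amalgHom {Γ : Type*} [Group Γ] (G : Bool → Subgroup Γ) (J : Subgroup Γ)
    (hJ : ∀ m, J ≤ G m) :
    Monoid.PushoutI (fun m => Subgroup.inclusion (hJ m)) →* Γ :=
  Monoid.PushoutI.lift (fun m => (G m).subtype) J.subtype
    (fun m => by ext x; rfl)

section Aux

variable {Γ : Type*} [Group Γ] {Z : Type*} [MulAction Γ Z]
variable {G : Bool → Subgroup Γ} {J : Subgroup Γ} {X : Bool → Set Z}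

lemma nfletter_inv {m : Bool} {x : Γ} (h : NFLetter G J m x) : NFLetter G J m x⁻¹ :=
  ⟨inv_mem h.1, fun hx => h.2 (by simpa using inv_mem hx)⟩

lemma nfletter_of_inv {m : Bool} {x : Γ} (h : NFLetter G J m x⁻¹) : NFLetter G J m x := by
  simpa using nfletter_inv h

lemma nfletter_unique (hGJ : ∀ g : Γ, g ∈ G true → g ∈ G false → g ∈ J)
    {m m' : Bool} {x : Γ} (h : NFLetter G J m x) (h' : NFLetter G J m' x) : m = m' := by
  by_contra hne
  apply h.2
  cases m <;> cases m' <;> simp_all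
  · exact hGJ x h'.1 h.1
  · exact hGJ x h.1 h'.1

lemma mem_not_mem_not (hd : Disjoint (X true) (X false)) {m : Bool} {x : Z}
    (h1 : x ∈ X m) (h2 : x ∈ X (!m)) : False := by
  cases m
  · exact Set.disjoint_left.mp hd h2 h1
  · exact Set.disjoint_left.mp hd h1 h2

lemma chain'_imp_of_mem {α : Type*} {R S : α → α → Prop} :
    ∀ {l : List α}, (∀ a ∈ l, ∀ b ∈ l, R a b → S a b) → l.Chain' R → l.Chain' S
  | [], _, _ => List.isChain_nil
  | [_], _, _ => List.isChain_singleton _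
  | a :: b :: t, h, hc => by
    rw [List.Chain', List.isChain_cons_cons] at hc ⊢
    refine ⟨h a (by simp) b (by simp) hc.1, ?_⟩
    exact chain'_imp_of_mem
      (fun x hx y hy => h x (List.mem_cons_of_mem a hx) y (List.mem_cons_of_mem a hy)) hc.2

lemma hGJ_of_proper (hX : IsProperInteractivePair G J X) :
    ∀ g : Γ, g ∈ G true → g ∈ G false → g ∈ J := by
  intro g h1 h2
  by_contra hg
  obtain ⟨hpair, m₀, x, hx, hprop⟩ := hX
  have hgm : NFLetter G J m₀ g⁻¹ :=
    ⟨inv_mem (by cases m₀ <;> assumption), fun h => hg (by simpa using inv_mem h)⟩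
  have hy : g⁻¹ • x ∈ X (!m₀) := hpair.2.2.2 m₀ g⁻¹ hgm (Set.smul_mem_smul_set hx)
  exact hprop g (by cases m₀ <;> assumption) (Set.mem_smul_set_iff_inv_smul_mem.mpr hy)

/-- The ping-pong lemma: the product of a normal form whose first letter lies in factor `m`
maps `X m` into `X (!k)` for some factor `k` of the last letter. -/
lemma pingpong (hpair : IsInteractivePair G J X) :
    ∀ (t : List Γ) (a : Γ),
      (∀ x ∈ a :: t, NFLetter G J true x ∨ NFLetter G J false x) →
      (a :: t).Chain' (fun a b => ∀ m, NFLetter G J m b → NFLetter G J (!m) a) →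
      ∀ m g, (a :: t).getLast? = some g → NFLetter G J m g →
      ∃ k, NFLetter G J k a ∧ (a :: t).prod • X m ⊆ X (!k)
  | [], a, _, _, m, g, hg, hm => by
    simp only [List.getLast?_singleton, Option.some.injEq] at hg
    subst hg
    refine ⟨m, hm, ?_⟩
    simp only [List.prod_cons, List.prod_nil, mul_one]
    exact hpair.2.2.2 m a hm
  | b :: t, a, hlet, hch, m, g, hg, hm => by
    rw [List.Chain', List.isChain_cons_cons] at hch
    rw [List.getLast?_cons_cons] at hg
    obtain ⟨k, hkb, hsub⟩ := pingpong hpair t b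
      (fun x hx => hlet x (List.mem_cons_of_mem a hx)) hch.2 m g hg hm
    have ha : NFLetter G J (!k) a := hch.1 k hkb
    refine ⟨!k, ha, ?_⟩
    have hpr : (a :: b :: t).prod • X m = a • ((b :: t).prod • X m) := by
      rw [List.prod_cons, mul_smul]
    rw [hpr]
    calc a • ((b :: t).prod • X m) ⊆ a • X (!k) := Set.smul_set_mono hsub
      _ ⊆ X (!(!k)) := hpair.2.2.2 (!k) a ha

/-- Key step: no normal form whose first letter lies in the "proper" factor `m₀`
has product `1`. -/
lemma claim_no_one (hpair : IsInteractivePair G J X) {m₀ : Bool} {x : Z}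
    (hx : x ∈ X m₀) (hprop : ∀ g ∈ G (!m₀), x ∉ g • X (!m₀)) :
    ∀ (t : List Γ) (a : Γ),
      (∀ x ∈ a :: t, NFLetter G J true x ∨ NFLetter G J false x) →
      (a :: t).Chain' (fun a b => ∀ m, NFLetter G J m b → NFLetter G J (!m) a) →
      ∀ g, (a :: t).getLast? = some g → NFLetter G J m₀ g →
      (a :: t).prod ≠ 1
  | [], a, _, _, g, hg, hm, hprod => by
    simp only [List.getLast?_singleton, Option.some.injEq] at hg
    subst hg
    simp only [List.prod_cons, List.prod_nil, mul_one] at hprod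
    exact hm.2 (hprod ▸ J.one_mem)
  | b :: t, a, hlet, hch, g, hg, hm, hprod => by
    rw [List.Chain', List.isChain_cons_cons] at hch
    rw [List.getLast?_cons_cons] at hg
    obtain ⟨k, hkb, hsub⟩ := pingpong hpair t b
      (fun x hx => hlet x (List.mem_cons_of_mem a hx)) hch.2 m₀ g hg hm
    have ha : NFLetter G J (!k) a := hch.1 k hkb
    have hy : (b :: t).prod • x ∈ X (!k) := hsub (Set.smul_mem_smul_set hx)
    have hxy : a • ((b :: t).prod • x) = x := by
      rw [← mul_smul, ← List.prod_cons, hprod, one_smul]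
    by_cases hk : k = !m₀
    · subst hk
      rw [Bool.not_not] at ha hy
      have hxm : x ∈ X (!m₀) := hxy ▸ hpair.2.2.2 m₀ a ha (Set.smul_mem_smul_set hy)
      exact mem_not_mem_not hpair.2.1 hx hxm
    · have hk' : k = m₀ := by cases k <;> cases m₀ <;> simp_all
      subst hk'
      exact hprop a ha.1 (hxy ▸ Set.smul_mem_smul_set hy)

/-- The value of any normal form is nontrivial. -/
lemma normal_form_prod_ne_one (hX : IsProperInteractivePair G J X) :
    ∀ w : List Γ, IsNormalForm G J w → w.prod ≠ 1 := by
  have hGJ := hGJ_of_proper hX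
  obtain ⟨hpair, m₀, x, hx, hprop⟩ := hX
  rintro w ⟨hne, hlet, hch⟩ hprod
  obtain ⟨a, t, rfl⟩ : ∃ a t, w = a :: t := by
    cases w with
    | nil => exact absurd rfl hne
    | cons a t => exact ⟨a, t, rfl⟩
  -- the last letter
  set g : Γ := (a :: t).getLast (List.cons_ne_nil a t) with hgdef
  have hg : (a :: t).getLast? = some g := List.getLast?_eq_getLast (List.cons_ne_nil a t)
  have hgmem : g ∈ a :: t := List.getLast_mem (List.cons_ne_nil a t)
  obtain ⟨m, hm⟩ : ∃ m, NFLetter G J m g := by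
    rcases hlet g hgmem with h | h
    exacts [⟨true, h⟩, ⟨false, h⟩]
  by_cases hmm : m = m₀
  · subst hmm
    exact claim_no_one hpair hx hprop t a hlet hch g hg hm hprod
  · have hm' : m = !m₀ := by cases m <;> cases m₀ <;> simp_all
    subst hm'
    -- apply ping-pong to the whole word to find the factor of the first letter
    obtain ⟨k, hka, hsub⟩ := pingpong hpair t a hlet hch (!m₀) g hg hm
    rw [hprod, one_smul] at hsub
    by_cases hk : k = !m₀
    · subst hk
      rw [Bool.not_not] at hsub
      obtain ⟨y, hy⟩ := hpair.1 (!m₀)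
      exact mem_not_mem_not hpair.2.1 (hsub hy) hy
    · have hk' : k = m₀ := by revert hk; cases k <;> cases m₀ <;> decide
      subst hk'
      -- consider the reversed word of inverses
      set w' : List Γ := ((a :: t).map (fun u => u⁻¹)).reverse with hw'
      have hlet' : ∀ y ∈ w', NFLetter G J true y ∨ NFLetter G J false y := by
        intro y hy
        rw [hw', List.mem_reverse, List.mem_map] at hy
        obtain ⟨u, hu, rfl⟩ := hy
        rcases hlet u hu with h | h
        exacts [Or.inl (nfletter_inv h), Or.inr (nfletter_inv h)]
      have hch' : w'.Chain' (fun a b => ∀ m, NFLetter G J m b → NFLetter G J (!m) a) := by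
        rw [hw', List.Chain', List.isChain_reverse, List.isChain_map]
        refine chain'_imp_of_mem (R := fun a b => ∀ m, NFLetter G J m b → NFLetter G J (!m) a)
          ?_ hch
        intro u hu v hv hrel m hmu
        -- hmu : NFLetter m u⁻¹ ; goal : NFLetter (!m) v⁻¹
        have hmu' : NFLetter G J m u := nfletter_of_inv hmu
        obtain ⟨mv, hmv⟩ : ∃ mv, NFLetter G J mv v := by
          rcases hlet v hv with h | h
          exacts [⟨true, h⟩, ⟨false, h⟩]
        have hu2 : NFLetter G J (!mv) u := hrel mv hmv
        have : m = !mv := nfletter_unique hGJ hmu' hu2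
        have hmv' : mv = !m := by revert this; cases m <;> cases mv <;> decide
        exact nfletter_inv (hmv' ▸ hmv)
      have hlast' : w'.getLast? = some a⁻¹ := by
        rw [hw', List.getLast?_reverse, List.head?_map]
        rfl
      have hprod' : w'.prod = 1 := by
        rw [hw', ← List.prod_inv_reverse, hprod, inv_one]
      obtain ⟨c, s, hcs⟩ : ∃ c s, w' = c :: s := by
        cases hwe : w' with
        | nil => rw [hwe] at hlast'; simp at hlast'
        | cons c s => exact ⟨c, s, rfl⟩
      rw [hcs] at hlet' hch' hlast' hprod'
      exact claim_no_one hpair hx hprop s c hlet' hch' a⁻¹ hlast'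
        (nfletter_inv hka) hprod'

end Aux

theorem stmt3 {Γ : Type*} [Group Γ] {Z : Type*} [MulAction Γ Z]
    (G : Bool → Subgroup Γ) (J : Subgroup Γ) (hJ : ∀ m, J ≤ G m)
    (X : Bool → Set Z) (hX : IsProperInteractivePair G J X) :
    Function.Injective (amalgHom G J hJ) ∧
      ∀ w : List Γ, IsNormalForm G J w → w.prod ≠ 1 := by
  classical
  have hne := normal_form_prod_ne_one hX
  have hGJ := hGJ_of_proper hX
  refine ⟨?_, hne⟩
  set φ : ∀ m : Bool, (J : Subgroup Γ) →* G m := fun m => Subgroup.inclusion (hJ m) with hφdef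
  have hφ : ∀ i, Function.Injective (φ i) := fun i => Subgroup.inclusion_injective (hJ i)
  obtain ⟨d⟩ := Monoid.PushoutI.NormalWord.transversal_nonempty φ hφ
  rw [injective_iff_map_eq_one]
  intro u hu
  set w' : Monoid.PushoutI.NormalWord d := Monoid.PushoutI.NormalWord.equiv u with hw'
  have hprodw : w'.prod = u := by
    rw [hw', show (Monoid.PushoutI.NormalWord.equiv u : Monoid.PushoutI.NormalWord d)
        = u • Monoid.PushoutI.NormalWord.empty from rfl,
      Monoid.PushoutI.NormalWord.prod_smul, Monoid.PushoutI.NormalWord.prod_empty, mul_one]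
  -- computing the image of a word under the amalgamated homomorphism
  have key : ∀ L : List (Σ i : Bool, G i),
      amalgHom G J hJ (Monoid.PushoutI.ofCoprodI
          (List.prod (L.map fun l => Monoid.CoprodI.of l.2)))
        = (L.map fun l => ((l.2 : Γ))).prod := by
    intro L
    induction L with
    | nil => simp
    | cons l ls ih =>
      rw [List.map_cons, List.prod_cons, map_mul, map_mul, ih,
        Monoid.PushoutI.ofCoprodI_of,
        show amalgHom G J hJ (Monoid.PushoutI.of l.1 l.2) = ((l.2 : Γ)) from
          Monoid.PushoutI.lift_of _ _ _ _]
      simp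
  have hΦ : (w'.head : Γ) * (w'.toList.map fun l => ((l.2 : Γ))).prod = 1 := by
    have h1 := congrArg (amalgHom G J hJ) hprodw
    rw [hu] at h1
    rw [Monoid.PushoutI.NormalWord.prod, map_mul] at h1
    rw [show w'.toWord.prod
        = (List.prod (w'.toList.map fun l => Monoid.CoprodI.of l.2) :
            Monoid.CoprodI fun i => ↥(G i)) from rfl] at h1
    rw [key] at h1
    rw [show amalgHom G J hJ (Monoid.PushoutI.base φ w'.head) = (w'.head : Γ) from
      Monoid.PushoutI.lift_base _ _ _ _] at h1
    exact h1
  -- every letter of the normal word is a genuine letter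
  have hNF : ∀ l ∈ w'.toList, NFLetter G J l.1 ((l.2 : Γ)) := by
    intro l hl
    refine ⟨l.2.2, fun hJmem => ?_⟩
    have hrange : l.2 ∈ (φ l.1).range := ⟨⟨(l.2 : Γ), hJmem⟩, Subtype.ext rfl⟩
    have hset : l.2 ∈ d.set l.1 := w'.normalized l.1 l.2 (by
      cases l; exact hl)
    have hone : l.2 = 1 := by
      obtain ⟨p, _, hup⟩ := (d.compl l.1).existsUnique l.2
      have e1 := hup ⟨⟨l.2, hrange⟩, ⟨1, d.one_mem l.1⟩⟩ (mul_one _)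
      have e2 := hup ⟨⟨1, Subgroup.one_mem _⟩, ⟨l.2, hset⟩⟩ (one_mul _)
      have := e1.trans e2.symm
      have := congrArg (fun q => (q.2 : G l.1)) this
      simpa using this.symm
    exact Monoid.CoprodI.Word.ne_one w'.toWord l (by cases l; exact hl) (by
      simpa using congrArg Subtype.val hone)
  cases hL : w'.toList with
  | nil =>
    have hh : (w'.head : Γ) = 1 := by simpa [hL] using hΦ
    have hh' : w'.head = 1 := by exact_mod_cast hh
    have hp1 : w'.prod = 1 := by
      rw [Monoid.PushoutI.NormalWord.prod, hh',
        show w'.toWord.prod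
          = (List.prod (w'.toList.map fun l => Monoid.CoprodI.of l.2) :
              Monoid.CoprodI fun i => ↥(G i)) from rfl, hL]
      simp
    rw [hprodw] at hp1
    exact hp1
  | cons l ls =>
    exfalso
    have hl_mem : l ∈ w'.toList := by rw [hL]; exact List.mem_cons_self
    have hl2 : NFLetter G J l.1 ((l.2 : Γ)) := hNF l hl_mem
    set h0 : Γ := (w'.head : Γ) * (l.2 : Γ) with hh0
    have hNF0 : ∀ k, NFLetter G J k ((l.2 : Γ)) → NFLetter G J k h0 := by
      intro k hk
      refine ⟨mul_mem (hJ k w'.head.2) hk.1, fun hmem => hk.2 ?_⟩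
      have : ((l.2 : Γ)) = (w'.head : Γ)⁻¹ * h0 := by rw [hh0, inv_mul_cancel_left]
      rw [this]
      exact mul_mem (inv_mem w'.head.2) hmem
    set M : List Γ := h0 :: (ls.map fun l => ((l.2 : Γ))) with hM
    -- uniqueness of types of letters
    have hUniq : ∀ b ∈ w'.toList, ∀ m, NFLetter G J m ((b.2 : Γ)) → m = b.1 :=
      fun b hb m hm => nfletter_unique hGJ hm (hNF b hb)
    -- the coerced list is a chain
    have hchainC : ((l :: ls).map fun b => ((b.2 : Γ))).Chain'
        (fun a b => ∀ m, NFLetter G J m b → NFLetter G J (!m) a) := by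
      rw [List.Chain', List.isChain_map]
      refine chain'_imp_of_mem (R := fun a b : Σ i : Bool, G i => a.1 ≠ b.1) ?_
        (hL ▸ w'.toWord.chain_ne)
      intro a ha b hb hab m hmb
      have hmb' : m = b.1 := hUniq b (hL ▸ hb) m hmb
      have ha1 : a.1 = !m := by
        rw [hmb']; revert hab; cases a.1 <;> cases b.1 <;> decide
      exact ha1 ▸ hNF a (hL ▸ ha)
    have hM_ne : M ≠ [] := by simp [hM]
    have hM_let : ∀ y ∈ M, NFLetter G J true y ∨ NFLetter G J false y := by
      intro y hy
      rw [hM, List.mem_cons] at hy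
      rcases hy with rfl | hy
      · have := hNF0 l.1 hl2
        rcases Bool.dichotomy l.1 with hc | hc
        · exact Or.inr (hc ▸ this)
        · exact Or.inl (hc ▸ this)
      · rw [List.mem_map] at hy
        obtain ⟨b, hb, rfl⟩ := hy
        have hb' : b ∈ w'.toList := by rw [hL]; exact List.mem_cons_of_mem l hb
        have := hNF b hb'
        rcases Bool.dichotomy b.1 with hc | hc
        · exact Or.inr (hc ▸ this)
        · exact Or.inl (hc ▸ this)
    have hM_chain : M.Chain' (fun a b => ∀ m, NFLetter G J m b → NFLetter G J (!m) a) := by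
      rw [List.map_cons] at hchainC
      rw [List.Chain', List.isChain_cons] at hchainC ⊢
      exact ⟨fun b hb m hm => hNF0 (!m) (hchainC.1 b hb m hm), hchainC.2⟩
    have hM_prod : M.prod = 1 := by
      have h2 := hΦ
      rw [hL, List.map_cons, List.prod_cons, ← mul_assoc] at h2
      rw [hM, List.prod_cons]
      exact h2
    exact hne M ⟨hM_ne, hM_let, hM_chain⟩ hM_prod
end

section
/- Let Γ be a group acting on a set Z, G₁ and G₂ subgroups of Γ, and J a subgroup of G₁ ∩ G₂. Suppose (X₁, X₂) is an interactive pair for (G₁, G₂, J). Suppose moreover that for each m ∈ {1,2} there is a subset D_m ⊆ Z such that: (i) for every x ∈ D_m and every g ∈ G_m with g ≠ 1, g • x ∉ D_m; and (ii) g • (D_m ∩ X_{3−m}) ⊆ X_{3−m} for every g ∈ G_m. Set D = (D₁ ∩ X₂) ∪ (D₂ ∩ X₁). Then D is precisely invariant under the trivial subgroup in the subgroup ⟨G₁, G₂⟩ generated by G₁ and G₂, i.e. γ • D ∩ D = ∅ for every γ ∈ ⟨G₁, G₂⟩ with γ ≠ 1. Furthermore, if D is nonempty, then the canonical homomorphism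 Φ : G₁ *_J G₂ → Γ is injective. -/
open Pointwise

section Aux

variable {Γ : Type*} [Group Γ] {Z : Type*} [MulAction Γ Z]

/-- an alternating reduced list of letters -/
def AltList (G : Bool → Subgroup Γ) (J : Subgroup Γ) (L : List (Bool × Γ)) : Prop :=
  (∀ p ∈ L, NFLetter G J p.1 p.2) ∧ L.Chain' (fun a b => a.1 ≠ b.1)

/-- product of the letters of a list -/
def wprod (L : List (Bool × Γ)) : Γ := (L.map Prod.snd).prod

variable {G : Bool → Subgroup Γ} {J : Subgroup Γ}
  {X : Bool → Set Z} {D : Bool → Set Z}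

lemma mem_S_iff {x : Z} :
    x ∈ (D true ∩ X false) ∪ (D false ∩ X true) ↔ ∃ m, x ∈ D m ∩ X (!m) := by
  constructor
  · rintro (h | h)
    · exact ⟨true, h⟩
    · exact ⟨false, h⟩
  · rintro ⟨m, h⟩
    cases m
    · exact Or.inr h
    · exact Or.inl h

lemma disjX (hX : IsInteractivePair G J X) {b : Bool} {x : Z}
    (h1 : x ∈ X b) (h2 : x ∈ X (!b)) : False := by
  cases b
  · exact Set.disjoint_left.mp hX.2.1 h2 h1
  · exact Set.disjoint_left.mp hX.2.1 h1 h2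

lemma lemA_s4 (hX : IsInteractivePair G J X)
    (hmap : ∀ m, ∀ g ∈ G m, g • (D m ∩ X (!m)) ⊆ X (!m)) :
    ∀ (L : List (Bool × Γ)) (t : Bool) (g : Γ),
    AltList G J ((t, g) :: L) →
    ∀ (m : Bool) (x : Z), x ∈ D m ∩ X (!m) →
    wprod ((t, g) :: L) • x ∈ X (!t) := by
  intro L
  induction L with
  | nil =>
    intro t g hL m x hx
    have hg := hL.1 (t, g) (by simp)
    by_cases htm : t = m
    · subst htm
      have := hmap t g hg.1 ⟨x, hx, rfl⟩
      simpa [wprod] using this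
    · have ht : t = !m := by cases t <;> cases m <;> simp_all
      have := hX.2.2.2 t g hg ⟨x, ht ▸ hx.2, rfl⟩
      simpa [wprod] using this
  | cons p L ih =>
    obtain ⟨t', g'⟩ := p
    intro t g hL m x hx
    have hy : wprod ((t', g') :: L) • x ∈ X (!t') :=
      ih t' g' ⟨fun q hq => hL.1 q (List.mem_cons_of_mem _ hq), hL.2.tail⟩ m x hx
    have htt' : t ≠ t' := (List.isChain_cons_cons.mp hL.2).1
    have ht : (!t') = t := by cases t <;> cases t' <;> simp_all
    have hg := hL.1 (t, g) (by simp)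
    have : g • (wprod ((t', g') :: L) • x) ∈ X (!t) :=
      hX.2.2.2 t g hg ⟨_, ht ▸ hy, rfl⟩
    simpa [wprod, mul_smul] using this

lemma lemB_s4 (hX : IsInteractivePair G J X)
    (hfund : ∀ m, ∀ x ∈ D m, ∀ g ∈ G m, g ≠ 1 → g • x ∉ D m)
    (hmap : ∀ m, ∀ g ∈ G m, g • (D m ∩ X (!m)) ⊆ X (!m))
    (t : Bool) (g : Γ) (L : List (Bool × Γ))
    (hL : AltList G J ((t, g) :: L)) :
    ∀ x ∈ (D true ∩ X false) ∪ (D false ∩ X true),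
    wprod ((t, g) :: L) • x ∉ (D true ∩ X false) ∪ (D false ∩ X true) := by
  intro x hxS hyS
  obtain ⟨m, hx⟩ := mem_S_iff.mp hxS
  have hg := hL.1 (t, g) (by simp)
  set y := wprod ((t, g) :: L) • x with hy
  have hyX : y ∈ X (!t) := lemA_s4 hX hmap L t g hL m x hx
  obtain ⟨m', hy'⟩ := mem_S_iff.mp hyS
  have hm' : m' = t := by
    by_contra h
    have h1 : (!m') = t := by cases m' <;> cases t <;> simp_all
    exact disjX hX (h1 ▸ hy'.2) hyX
  rw [hm'] at hy'
  have hz : g⁻¹ • y ∈ X (!t) := hmap t g⁻¹ (inv_mem hg.1) ⟨y, hy', rfl⟩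
  have hzval : g⁻¹ • y = wprod L • x := by
    rw [hy]; simp [wprod, mul_smul]
  cases L with
  | nil =>
    have hxXt : x ∈ X (!t) := by
      rw [hzval] at hz; simpa [wprod] using hz
    by_cases hmt : m = t
    · subst hmt
      have hgx : g • x ∉ D m := hfund m x hx.1 g hg.1 (fun h => hg.2 (h ▸ one_mem J))
      refine hgx ?_
      rw [hy] at hy'
      simpa [wprod] using hy'.1
    · have h1 : (!m) = t := by cases m <;> cases t <;> simp_all
      exact disjX hX (h1 ▸ hx.2) hxXt
  | cons p L' =>
    obtain ⟨t'', g''⟩ := p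
    have ht'' : (!t'') = t := by
      have := (List.isChain_cons_cons.mp hL.2).1
      cases t <;> cases t'' <;> simp_all
    have hw : wprod ((t'', g'') :: L') • x ∈ X (!t'') :=
      lemA_s4 hX hmap L' t'' g'' ⟨fun q hq => hL.1 q (List.mem_cons_of_mem _ hq), hL.2.tail⟩ m x hx
    rw [← hzval] at hw
    exact disjX hX (ht'' ▸ hw) hz

/-- representability as an element of `J` or a reduced alternating word -/
def RepWord (G : Bool → Subgroup Γ) (J : Subgroup Γ) (γ : Γ) : Prop :=
  γ ∈ J ∨ ∃ (t : Bool) (g : Γ) (L : List (Bool × Γ)),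
    AltList G J ((t, g) :: L) ∧ γ = wprod ((t, g) :: L)

lemma rep_mul (hJle : ∀ m, J ≤ G m) {t : Bool} {g : Γ} (hg : g ∈ G t)
    {γ : Γ} (hγ : RepWord G J γ) : RepWord G J (g * γ) := by
  rcases hγ with hγJ | ⟨t', h₁, L', hAlt, rfl⟩
  · by_cases h : g * γ ∈ J
    · exact Or.inl h
    · refine Or.inr ⟨t, g * γ, [], ⟨?_, List.isChain_singleton _⟩, by simp [wprod]⟩
      rintro p hp
      simp only [List.mem_singleton] at hp
      subst hp
      exact ⟨mul_mem hg (hJle t hγJ), h⟩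
  · have hh₁ := hAlt.1 (t', h₁) (by simp)
    by_cases hgt' : g ∈ G t'
    · have hk : g * h₁ ∈ G t' := mul_mem hgt' hh₁.1
      have hprod : g * wprod ((t', h₁) :: L') = (g * h₁) * wprod L' := by
        simp [wprod, mul_assoc]
      by_cases hkJ : g * h₁ ∈ J
      · cases L' with
        | nil =>
          left
          rw [hprod]
          simpa [wprod] using hkJ
        | cons p L'' =>
          obtain ⟨t'', h''⟩ := p
          have hh'' := hAlt.1 (t'', h'') (by simp)
          refine Or.inr ⟨t'', (g * h₁) * h'', L'', ⟨?_, ?_⟩, ?_⟩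
          · rintro q hq
            rcases List.mem_cons.mp hq with hq | hq
            · subst hq
              refine ⟨mul_mem (hJle t'' hkJ) hh''.1, fun hc => hh''.2 ?_⟩
              have : ((g * h₁)⁻¹ * ((g * h₁) * h'')) ∈ J := mul_mem (inv_mem hkJ) hc
              rwa [inv_mul_cancel_left] at this
            · exact hAlt.1 q (List.mem_cons_of_mem _ (List.mem_cons_of_mem _ hq))
          · have hch : List.Chain' (fun a b => a.1 ≠ b.1) ((t'', h'') :: L'') := hAlt.2.tail
            unfold List.Chain' at hch ⊢
            rw [List.isChain_cons] at hch ⊢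
            exact hch
          · rw [hprod]
            simp [wprod, mul_assoc]
      · refine Or.inr ⟨t', g * h₁, L', ⟨?_, ?_⟩, hprod⟩
        · rintro q hq
          rcases List.mem_cons.mp hq with hq | hq
          · subst hq; exact ⟨hk, hkJ⟩
          · exact hAlt.1 q (List.mem_cons_of_mem _ hq)
        · have hch := hAlt.2
          unfold List.Chain' at hch ⊢
          rw [List.isChain_cons] at hch ⊢
          exact hch
    · have hgJ : g ∉ J := fun h => hgt' (hJle t' h)
      have htt' : t ≠ t' := fun h => hgt' (h ▸ hg)
      refine Or.inr ⟨t, g, (t', h₁) :: L', ⟨?_, ?_⟩, by simp [wprod]⟩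
      · rintro q hq
        rcases List.mem_cons.mp hq with hq | hq
        · subst hq; exact ⟨hg, hgJ⟩
        · exact hAlt.1 q hq
      · exact List.isChain_cons_cons.mpr ⟨htt', hAlt.2⟩

lemma rep_of_mem_sup (hJle : ∀ m, J ≤ G m) {γ : Γ}
    (h : γ ∈ G true ⊔ G false) : RepWord G J γ := by
  have h' : γ ∈ Subgroup.closure ((G true : Set Γ) ∪ (G false : Set Γ)) := by
    rw [Subgroup.closure_union, Subgroup.closure_eq, Subgroup.closure_eq]
    exact h
  clear h
  induction h' using Subgroup.closure_induction_left with
  | one => exact Or.inl (one_mem J)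
  | mul_left x hx y hy ih =>
    rcases hx with hx | hx
    · exact rep_mul hJle hx ih
    · exact rep_mul hJle hx ih
  | inv_mul_cancel x hx y hy ih =>
    rcases hx with hx | hx
    · exact rep_mul hJle (inv_mem hx) ih
    · exact rep_mul hJle (inv_mem hx) ih

lemma main_pt (hJle : ∀ m, J ≤ G m) (hX : IsInteractivePair G J X)
    (hfund : ∀ m, ∀ x ∈ D m, ∀ g ∈ G m, g ≠ 1 → g • x ∉ D m)
    (hmap : ∀ m, ∀ g ∈ G m, g • (D m ∩ X (!m)) ⊆ X (!m))
    {γ : Γ} (hrep : RepWord G J γ) (hne : γ ≠ 1) :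
    ∀ x ∈ (D true ∩ X false) ∪ (D false ∩ X true),
    γ • x ∉ (D true ∩ X false) ∪ (D false ∩ X true) := by
  rcases hrep with hJmem | ⟨t, g, L, hAlt, rfl⟩
  · intro x hxS hyS
    obtain ⟨m, hx⟩ := mem_S_iff.mp hxS
    have hyX : γ • x ∈ X (!m) := hmap m γ (hJle m hJmem) ⟨x, hx, rfl⟩
    obtain ⟨m', hy⟩ := mem_S_iff.mp hyS
    have hm' : m' = m := by
      by_contra h
      have h1 : (!m') = m := by cases m' <;> cases m <;> simp_all
      exact disjX hX (h1 ▸ hy.2) hyX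
    rw [hm'] at hy
    exact hfund m x hx.1 γ (hJle m hJmem) hne hy.1
  · exact lemB_s4 hX hfund hmap t g L hAlt

end Aux

open Monoid.PushoutI Monoid.PushoutI.NormalWord in
lemma inj_aux {Γ : Type*} [Group Γ] {Z : Type*} [MulAction Γ Z]
    {G : Bool → Subgroup Γ} {J : Subgroup Γ} (hJ : ∀ m, J ≤ G m)
    {X : Bool → Set Z} (hX : IsInteractivePair G J X)
    {D : Bool → Set Z}
    (hfund : ∀ m, ∀ x ∈ D m, ∀ g ∈ G m, g ≠ 1 → g • x ∉ D m)
    (hmap : ∀ m, ∀ g ∈ G m, g • (D m ∩ X (!m)) ⊆ X (!m))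
    {x : Z} (hxS : x ∈ (D true ∩ X false) ∪ (D false ∩ X true)) :
    Function.Injective (amalgHom G J hJ) := by
  classical
  rw [injective_iff_map_eq_one]
  intro w hw
  obtain ⟨d⟩ := transversal_nonempty (fun m => Subgroup.inclusion (hJ m))
    (fun m => Subgroup.inclusion_injective (hJ m))
  set nw := equiv (d := d) w with hnw
  have hwprod : nw.prod = w := (equiv (d := d)).symm_apply_apply w
  -- compute the image of a word under amalgHom
  have hcomp : ∀ lst : List (Σ i : Bool, ↥(G i)),
      amalgHom G J hJ (ofCoprodI (φ := fun m => Subgroup.inclusion (hJ m))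
        (List.prod (lst.map fun l => Monoid.CoprodI.of l.snd)))
      = wprod (lst.map fun l => (l.fst, (l.snd : Γ))) := by
    intro lst
    induction lst with
    | nil => simp [wprod]
    | cons a lst ih =>
      rw [List.map_cons, List.prod_cons, map_mul, map_mul, ofCoprodI_of]
      rw [List.map_cons]
      have h1 : amalgHom G J hJ
          (Monoid.PushoutI.of (φ := fun m => Subgroup.inclusion (hJ m)) a.fst a.snd)
          = (a.snd : Γ) := by
        simp [amalgHom, Monoid.PushoutI.lift_of]
      rw [h1, ih]
      simp [wprod]
  have hcomp2 : ∀ u : Monoid.CoprodI.Word (fun m => ↥(G m)),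
      amalgHom G J hJ (ofCoprodI (φ := fun m => Subgroup.inclusion (hJ m)) u.prod)
      = wprod (u.toList.map fun l => (l.fst, (l.snd : Γ))) :=
    fun u => hcomp u.toList
  have hbase : amalgHom G J hJ
      (Monoid.PushoutI.base (φ := fun m => Subgroup.inclusion (hJ m)) nw.head)
      = (nw.head : Γ) := by
    simp [amalgHom, Monoid.PushoutI.lift_base]
  have hγ : amalgHom G J hJ w
      = (nw.head : Γ) * wprod (nw.toList.map fun l => (l.fst, (l.snd : Γ))) := by
    rw [← hwprod]
    have hpr : nw.prod = Monoid.PushoutI.base (φ := fun m => Subgroup.inclusion (hJ m))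
        nw.head * ofCoprodI nw.toWord.prod := rfl
    rw [hpr, map_mul, hbase, hcomp2 nw.toWord]
  have hletter : ∀ l ∈ nw.toList, (l.snd : Γ) ∉ J := by
    intro l hl hc
    have hne1 : l.snd ≠ 1 := nw.ne_one l hl
    have hset : l.snd ∈ d.set l.fst := nw.normalized l.fst l.snd hl
    have hrange : l.snd ∈ (((fun m => Subgroup.inclusion (hJ m)) l.fst).range :
        Set ↥(G l.fst)) := ⟨⟨(l.snd : Γ), hc⟩, Subtype.ext rfl⟩
    have hone : (1 : ↥(G l.fst)) ∈ (((fun m => Subgroup.inclusion (hJ m)) l.fst).range :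
        Set ↥(G l.fst)) := one_mem ((fun m => Subgroup.inclusion (hJ m)) l.fst).range
    have heq := (d.compl l.fst).1
      (a₁ := (⟨l.snd, hrange⟩, ⟨1, d.one_mem l.fst⟩))
      (a₂ := (⟨1, hone⟩, ⟨l.snd, hset⟩)) (by simp)
    have h2 := congrArg (fun p => ((p.2 : ↥(G l.fst)))) heq
    simp only at h2
    exact hne1 (by simpa using h2.symm)
  rcases hlist : nw.toList with _ | ⟨a, ls⟩
  · have hhead : (nw.head : Γ) = 1 := by
      rw [hw, hlist] at hγ
      simpa [wprod] using hγ.symm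
    have hh1 : nw.head = 1 := by exact_mod_cast hhead
    have hempty : nw = Monoid.PushoutI.NormalWord.empty :=
      Monoid.PushoutI.NormalWord.ext hh1 hlist
    rw [← hwprod, hempty, Monoid.PushoutI.NormalWord.prod_empty]
  · exfalso
    set L := ls.map (fun l : Σ i : Bool, ↥(G i) => (l.fst, (l.snd : Γ))) with hLdef
    have haJ : (a.snd : Γ) ∉ J := hletter a (by rw [hlist]; simp)
    have hAlt : AltList G J ((a.fst, (nw.head : Γ) * (a.snd : Γ)) :: L) := by
      constructor
      · rintro q hq
        rcases List.mem_cons.mp hq with hq | hq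
        · subst hq
          refine ⟨mul_mem (hJ a.fst nw.head.2) a.snd.2, fun hc => haJ ?_⟩
          have h3 := mul_mem (inv_mem nw.head.2) hc
          rwa [inv_mul_cancel_left] at h3
        · obtain ⟨l, hl, rfl⟩ := List.mem_map.mp hq
          exact ⟨l.snd.2, hletter l (by rw [hlist]; exact List.mem_cons_of_mem _ hl)⟩
      · have hc := nw.chain_ne
        rw [hlist] at hc
        have hch0 : List.Chain' (fun p q : Bool × Γ => p.1 ≠ q.1)
            ((a.fst, (a.snd : Γ)) :: L) := by
          unfold List.Chain'
          have h4 := (List.isChain_map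
            (f := fun l : Σ i : Bool, ↥(G i) => (l.fst, (l.snd : Γ)))
            (R := fun p q : Bool × Γ => p.1 ≠ q.1) (l := a :: ls)).mpr hc
          simpa using h4
        unfold List.Chain' at hch0 ⊢
        rw [List.isChain_cons] at hch0 ⊢
        exact hch0
    have hone : wprod ((a.fst, (nw.head : Γ) * (a.snd : Γ)) :: L) = 1 := by
      rw [← hw, hγ, hlist]
      simp [wprod, mul_assoc, hLdef, List.map_map, Function.comp]
    exact lemB_s4 hX hfund hmap _ _ _ hAlt x hxS (by rw [hone, one_smul]; exact hxS)

theorem stmt4 {Γ : Type*} [Group Γ] {Z : Type*} [MulAction Γ Z]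
    (G : Bool → Subgroup Γ) (J : Subgroup Γ) (hJ : ∀ m, J ≤ G m)
    (X : Bool → Set Z) (hX : IsInteractivePair G J X)
    (D : Bool → Set Z)
    (hfund : ∀ m, ∀ x ∈ D m, ∀ g ∈ G m, g ≠ 1 → g • x ∉ D m)
    (hmap : ∀ m, ∀ g ∈ G m, g • (D m ∩ X (!m)) ⊆ X (!m)) :
    (∀ γ ∈ G true ⊔ G false, γ ≠ 1 →
        γ • ((D true ∩ X false) ∪ (D false ∩ X true)) ∩
          ((D true ∩ X false) ∪ (D false ∩ X true)) = ∅) ∧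
      (((D true ∩ X false) ∪ (D false ∩ X true)).Nonempty →
        Function.Injective (amalgHom G J hJ)) := by
  classical
  constructor
  · intro γ hγ hne
    rw [Set.eq_empty_iff_forall_notMem]
    rintro z ⟨hz1, hz2⟩
    obtain ⟨y, hyS, rfl⟩ := hz1
    exact main_pt hJ hX hfund hmap (rep_of_mem_sup hJ hγ) hne y hyS hz2
  · rintro ⟨x, hxS⟩
    exact inj_aux hJ hX hfund hmap hxS
end

section
/- Let Z be a topological space, Γ a group acting on Z such that each element of Γ acts as a homeomorphism of Z, G₁ and G₂ subgroups of Γ, and J a subgroup of G₁ ∩ G₂. Let X₁ and X₂ be disjoint nonempty open subsets of Z such that the set S := Z ∖ (X₁ ∪ X₂) equals the topological frontier of X₁ and also equals the topological frontier of X₂. If for each m ∈ {1,2} the set X_m is precisely invariant under J in G_m, then g • X₁ ⊆ X₂ for every g ∈ G₁∖J and g • X₂ ⊆ X₁ for every g ∈ G₂∖J; in particular, (X₁, X₂) is an interactive pair for (G₁, G₂, J). -/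
open Pointwise

theorem stmt5 {Γ : Type*} [Group Γ] {Z : Type*} [TopologicalSpace Z] [MulAction Γ Z]
    [ContinuousConstSMul Γ Z]
    (G : Bool → Subgroup Γ) (J : Subgroup Γ) (hJ : ∀ m, J ≤ G m)
    (X : Bool → Set Z)
    (hne : ∀ m, (X m).Nonempty) (hopen : ∀ m, IsOpen (X m))
    (hdisj : Disjoint (X true) (X false))
    (hfrontier : ∀ m, (X true ∪ X false)ᶜ = frontier (X m))
    (hprec : ∀ m, (∀ j ∈ J, j • X m = X m) ∧
      ∀ g ∈ G m, g ∉ J → (g • X m) ∩ X m = ∅) :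
    (∀ m, ∀ g : Γ, NFLetter G J m g → g • X m ⊆ X (!m)) ∧
      IsInteractivePair G J X := by
  have key : ∀ m, ∀ g : Γ, NFLetter G J m g → g • X m ⊆ X (!m) := by
    intro m g hg z hz
    by_contra hz'
    have hdis := (hprec m).2 g hg.1 hg.2
    have hzm : z ∉ X m := fun h =>
      Set.eq_empty_iff_forall_notMem.mp hdis z ⟨hz, h⟩
    have hfr : z ∈ frontier (X m) := by
      rw [← hfrontier m]
      intro h
      cases m <;> simp only [Bool.not_true, Bool.not_false] at hz' <;>
        rcases h with h | h <;> tauto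
    have hcl : z ∈ closure (X m) := hfr.1
    obtain ⟨w, hw1, hw2⟩ := mem_closure_iff.mp hcl _ ((hopen m).smul g) hz
    exact Set.eq_empty_iff_forall_notMem.mp hdis w ⟨hw1, hw2⟩
  exact ⟨key, hne, hdisj, fun m => (hprec m).1, key⟩
end

section
/- Let Γ be a group acting on a set Z, G₁ and G₂ subgroups of Γ, and J a subgroup of G₁ ∩ G₂. Let B₁, B₂ ⊆ Z satisfy j • B_m = B_m for every j ∈ J and g • B_m ⊆ B_{3−m} for every g ∈ G_m∖J (m ∈ {1,2}). For each n ≥ 1 define T_n ⊆ Z as the union of all sets (γ_n⋯γ_1) • B₁ where γ_n, …, γ_1 is a normal form of length n with γ_1 ∈ G₁∖J, together with all sets (γ_n⋯γ_1) • B₂ where γ_n, …, γ_1 is a normal form of length n with γ_1 ∈ G₂∖J. Then the sequence {T_n} is decreasing with respect to inclusion: T_n ⊆ T_{n−1} for every n ≥ 2. -/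
open Pointwise

/-- `Tset G J B n` is the union of all sets `(γ_n ⋯ γ_1) • B k` over normal forms
`γ_n, …, γ_1` of length `n` whose first letter `γ_1` lies in `G k ∖ J`, for `k ∈ {1,2}`. -/
def Tset {Γ : Type*} [Group Γ] {Z : Type*} [MulAction Γ Z]
    (G : Bool → Subgroup Γ) (J : Subgroup Γ) (B : Bool → Set Z) (n : ℕ) : Set Z :=
  ⋃ (k : Bool) (w : List Γ)
    (_ : IsNormalForm G J w ∧ w.length = n ∧
      ∃ h : w ≠ [], NFLetter G J k (w.getLast h)),
    w.prod • B k

theorem stmt7 {Γ : Type*} [Group Γ] {Z : Type*} [MulAction Γ Z]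
    (G : Bool → Subgroup Γ) (J : Subgroup Γ) (hJ : ∀ m, J ≤ G m)
    (B : Bool → Set Z)
    (hinv : ∀ m, ∀ j ∈ J, j • B m = B m)
    (hmap : ∀ m, ∀ g : Γ, NFLetter G J m g → g • B m ⊆ B (!m)) :
    ∀ n : ℕ, 2 ≤ n → Tset G J B n ⊆ Tset G J B (n - 1) := by
  intro n hn z hz
  simp only [Tset, Set.mem_iUnion] at hz ⊢
  obtain ⟨k, w, ⟨⟨hne, hall, hchain⟩, hlen, h, hlast⟩, hzmem⟩ := hz
  set l := w.dropLast with hl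
  set a := w.getLast h with ha
  have hdecomp : w = l ++ [a] := (List.dropLast_append_getLast h).symm
  have hllen : l.length = n - 1 := by
    rw [List.length_dropLast, hlen]
  have hlne : l ≠ [] := by
    intro hcon
    have := hllen
    rw [hcon] at this
    simp at this
    omega
  -- chain' splitting
  rw [hdecomp] at hchain
  rw [List.Chain', List.isChain_append] at hchain
  obtain ⟨hchainl, -, hrel⟩ := hchain
  have hlastl : NFLetter G J (!k) (l.getLast hlne) := by
    have := hrel (l.getLast hlne) (by simp [List.getLast?_eq_getLast hlne]) a rfl
    exact this k hlast
  refine ⟨!k, l, ⟨⟨hlne, ?_, hchainl⟩, hllen, hlne, hlastl⟩, ?_⟩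
  · intro x hx
    exact hall x (by rw [hdecomp]; exact List.mem_append_left _ hx)
  · have hprod : w.prod = l.prod * a := by
      rw [hdecomp, List.prod_append, List.prod_singleton]
    rw [hprod, mul_smul] at hzmem
    exact Set.smul_set_mono (hmap k a hlast) hzmem
end

section
/- Let Γ be a group acting on a set Z, G₁ and G₂ subgroups of Γ, and J a subgroup of G₁ ∩ G₂. Let B₁, B₂ ⊆ Z satisfy Z = B₁ ∪ B₂, and set S = B₁ ∩ B₂ and X_m = Z ∖ B_{3−m} for m ∈ {1,2}. Assume j • B_m = B_m for every j ∈ J, and for every g ∈ G_m∖J both g • B_m ⊆ B_{3−m} and g • X_m ⊆ X_{3−m}. Then S is precisely embedded: for every γ in the subgroup ⟨G₁, G₂⟩ generated by G₁ and G₂, either γ • S ∩ X₁ = ∅ or γ • S ∩ X₂ = ∅. -/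
open Pointwise

/-- Normal forms: reduced words starting with a letter of factor `m`, ending with a `J`-element. -/
inductive NF {Γ : Type*} [Group Γ] (G : Bool → Subgroup Γ) (J : Subgroup Γ) : Bool → Γ → Prop
  | base (m : Bool) (g j : Γ) : NFLetter G J m g → j ∈ J → NF G J m (g * j)
  | cons (m : Bool) (g γ : Γ) : NFLetter G J m g → NF G J (!m) γ → NF G J m (g * γ)

lemma letter_j_mul {Γ : Type*} [Group Γ] {G : Bool → Subgroup Γ} {J : Subgroup Γ}
    (hJ : ∀ m, J ≤ G m) {m : Bool} {j g : Γ} (hj : j ∈ J) (hg : NFLetter G J m g) :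
    NFLetter G J m (j * g) := by
  refine ⟨(G m).mul_mem (hJ m hj) hg.1, fun h => hg.2 ?_⟩
  have := J.mul_mem (J.inv_mem hj) h
  rwa [inv_mul_cancel_left] at this

lemma nf_j_mul {Γ : Type*} [Group Γ] {G : Bool → Subgroup Γ} {J : Subgroup Γ}
    (hJ : ∀ m, J ≤ G m) {m : Bool} {j γ : Γ} (hj : j ∈ J) (h : NF G J m γ) :
    NF G J m (j * γ) := by
  cases h with
  | base m g j' hg hj' =>
      rw [← mul_assoc]
      exact NF.base m _ j' (letter_j_mul hJ hj hg) hj'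
  | cons m g γ' hg hγ' =>
      rw [← mul_assoc]
      exact NF.cons m _ γ' (letter_j_mul hJ hj hg) hγ'

lemma nf_letter_mul {Γ : Type*} [Group Γ] {G : Bool → Subgroup Γ} {J : Subgroup Γ}
    (hJ : ∀ m, J ≤ G m) {m : Bool} {g γ : Γ} (hg : NFLetter G J m g) (h : NF G J m γ) :
    g * γ ∈ J ∨ NF G J m (g * γ) ∨ NF G J (!m) (g * γ) := by
  cases h with
  | base m g₁ j hg₁ hj =>
      by_cases hgg : g * g₁ ∈ J
      · left
        rw [← mul_assoc]
        exact J.mul_mem hgg hj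
      · right; left
        rw [← mul_assoc]
        exact NF.base m _ j ⟨(G m).mul_mem hg.1 hg₁.1, hgg⟩ hj
  | cons m g₁ γ' hg₁ hγ' =>
      by_cases hgg : g * g₁ ∈ J
      · right; right
        rw [← mul_assoc]
        exact nf_j_mul hJ hgg hγ'
      · right; left
        rw [← mul_assoc]
        exact NF.cons m _ γ' ⟨(G m).mul_mem hg.1 hg₁.1, hgg⟩ hγ'

lemma nf_mul {Γ : Type*} [Group Γ] {G : Bool → Subgroup Γ} {J : Subgroup Γ}
    (hJ : ∀ m, J ≤ G m) {m : Bool} {g γ : Γ} (hg : g ∈ G m)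
    (h : γ ∈ J ∨ ∃ k, NF G J k γ) : g * γ ∈ J ∨ ∃ k, NF G J k (g * γ) := by
  by_cases hgJ : g ∈ J
  · rcases h with h | ⟨k, h⟩
    · exact Or.inl (J.mul_mem hgJ h)
    · exact Or.inr ⟨k, nf_j_mul hJ hgJ h⟩
  · have hletter : NFLetter G J m g := ⟨hg, hgJ⟩
    rcases h with h | ⟨k, h⟩
    · exact Or.inr ⟨m, NF.base m g γ hletter h⟩
    · by_cases hkm : k = m
      · subst hkm
        rcases nf_letter_mul hJ hletter h with h' | h' | h'
        · exact Or.inl h'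
        · exact Or.inr ⟨k, h'⟩
        · exact Or.inr ⟨!k, h'⟩
      · have hk : k = !m := by revert hkm; cases m <;> cases k <;> simp
        subst hk
        exact Or.inr ⟨m, NF.cons m g γ hletter h⟩

lemma mem_sup_nf {Γ : Type*} [Group Γ] {G : Bool → Subgroup Γ} {J : Subgroup Γ}
    (hJ : ∀ m, J ≤ G m) : ∀ γ ∈ G true ⊔ G false, γ ∈ J ∨ ∃ k, NF G J k γ := by
  have hsup : G true ⊔ G false = Subgroup.closure (↑(G true) ∪ ↑(G false)) := by
    rw [Subgroup.closure_union, Subgroup.closure_eq, Subgroup.closure_eq]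
  intro γ hγ
  rw [hsup] at hγ
  induction hγ using Subgroup.closure_induction_left with
  | one => exact Or.inl J.one_mem
  | mul_left x hx y hy ih =>
      rcases hx with hx | hx
      · exact nf_mul (m := true) hJ hx ih
      · exact nf_mul (m := false) hJ hx ih
  | inv_mul_cancel x hx y hy ih =>
      rcases hx with hx | hx
      · exact nf_mul (m := true) hJ ((G true).inv_mem hx) ih
      · exact nf_mul (m := false) hJ ((G false).inv_mem hx) ih

theorem stmt8 {Γ : Type*} [Group Γ] {Z : Type*} [MulAction Γ Z]
    (G : Bool → Subgroup Γ) (J : Subgroup Γ) (hJ : ∀ m, J ≤ G m)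
    (B : Bool → Set Z) (hcover : B true ∪ B false = Set.univ)
    (S : Set Z) (hS : S = B true ∩ B false)
    (X : Bool → Set Z) (hX : ∀ m, X m = (B (!m))ᶜ)
    (hinv : ∀ m, ∀ j ∈ J, j • B m = B m)
    (hmapB : ∀ m, ∀ g : Γ, NFLetter G J m g → g • B m ⊆ B (!m))
    (hmapX : ∀ m, ∀ g : Γ, NFLetter G J m g → g • X m ⊆ X (!m)) :
    ∀ γ ∈ G true ⊔ G false, (γ • S) ∩ X true = ∅ ∨ (γ • S) ∩ X false = ∅ := by
  -- Basic set facts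
  have hSB : ∀ m, S ⊆ B m := by
    intro m
    rw [hS]
    cases m
    · exact Set.inter_subset_right
    · exact Set.inter_subset_left
  have hBsub : ∀ m, B m ⊆ S ∪ X m := by
    intro m x hx
    by_cases hx' : x ∈ B (!m)
    · left
      rw [hS]; cases m
      · exact ⟨by simpa using hx', hx⟩
      · exact ⟨hx, by simpa using hx'⟩
    · right
      rw [hX]
      exact hx'
  have hSX : ∀ m, S ∩ X m = ∅ := by
    intro m
    rw [hX, Set.eq_empty_iff_forall_notMem]
    intro x ⟨hx1, hx2⟩
    exact hx2 (hSB (!m) hx1)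
  have hXX : X true ∩ X false = ∅ := by
    rw [hX, hX, Set.eq_empty_iff_forall_notMem]
    intro x ⟨hx1, hx2⟩
    have : x ∈ B true ∪ B false := hcover ▸ Set.mem_univ x
    rcases this with h | h
    · exact hx2 (by simpa using h)
    · exact hx1 (by simpa using h)
  have hSinv : ∀ j ∈ J, j • S = S := by
    intro j hj
    rw [hS, Set.smul_set_inter, hinv true j hj, hinv false j hj]
  -- letters acting on S
  have hSmap : ∀ m, ∀ g : Γ, NFLetter G J m g → g • S ⊆ S ∪ X (!m) := by
    intro m g hg
    calc g • S ⊆ g • B m := Set.smul_set_mono (hSB m)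
    _ ⊆ B (!m) := hmapB m g hg
    _ ⊆ S ∪ X (!m) := hBsub (!m)
  -- key lemma: normal forms map S into S ∪ X (!m)
  have key : ∀ m γ, NF G J m γ → γ • S ⊆ S ∪ X (!m) := by
    intro m γ h
    induction h with
    | base m g j hg hj =>
        rw [mul_smul, hSinv j hj]
        exact hSmap m g hg
    | cons m g γ' hg hγ' ih =>
        rw [mul_smul]
        calc g • (γ' • S) ⊆ g • (S ∪ X (!!m)) := Set.smul_set_mono ih
        _ = g • S ∪ g • X m := by rw [Bool.not_not, Set.smul_set_union]
        _ ⊆ (S ∪ X (!m)) ∪ X (!m) := Set.union_subset_union (hSmap m g hg) (hmapX m g hg)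
        _ = S ∪ X (!m) := by rw [Set.union_assoc, Set.union_self]
  intro γ hγ
  rcases mem_sup_nf hJ γ hγ with h | ⟨k, h⟩
  · left
    rw [hSinv γ h]
    exact hSX true
  · have hsub : γ • S ⊆ S ∪ X (!k) := key k γ h
    have hempty : γ • S ∩ X k = ∅ := by
      rw [Set.eq_empty_iff_forall_notMem]
      intro x ⟨hx1, hx2⟩
      rcases hsub hx1 with h' | h'
      · exact (Set.eq_empty_iff_forall_notMem.mp (hSX k)) x ⟨h', hx2⟩
      · cases k
        · exact (Set.eq_empty_iff_forall_notMem.mp hXX) x ⟨h', hx2⟩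
        · exact (Set.eq_empty_iff_forall_notMem.mp hXX) x ⟨hx2, h'⟩
    cases k
    · exact Or.inr hempty
    · exact Or.inl hempty
end

section
/- Let Γ be a group acting on a set Z, G₁ and G₂ subgroups of Γ, and J a subgroup of G₁ ∩ G₂. Let B₁, B₂ ⊆ Z satisfy Z = B₁ ∪ B₂, set S = B₁ ∩ B₂ and X_m = Z ∖ B_{3−m}, and assume j • B_m = B_m for every j ∈ J and, for every g ∈ G_m∖J, both g • B_m ⊆ B_{3−m} and g • X_m ⊆ X_{3−m} (m ∈ {1,2}). Assume in addition that S is precisely invariant under J in G₁ and in G₂, i.e. g • S ∩ S = ∅ for every g ∈ G₁∖J and every g ∈ G₂∖J. Then S is precisely invariant under J in the subgroup ⟨G₁, G₂⟩ generated by G₁ and G₂: j • S = S for every j ∈ J, and γ • S ∩ S = ∅ for every γ ∈ ⟨G₁, G₂⟩ ∖ J. -/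
open Pointwise

section Aux

variable {Γ : Type*} [Group Γ] {G : Bool → Subgroup Γ} {J : Subgroup Γ}

/-- Alternating words of letters; the index records the type of the leftmost letter. -/
inductive AltWord (G : Bool → Subgroup Γ) (J : Subgroup Γ) : Bool → Γ → Prop
  | base {m : Bool} {x : Γ} : NFLetter G J m x → AltWord G J m x
  | step {m : Bool} {w x : Γ} : AltWord G J m w → NFLetter G J (!m) x →
      AltWord G J (!m) (x * w)

lemma NFLetter.mulJ_right (hJ : ∀ m, J ≤ G m) {m : Bool} {x j : Γ} (hx : NFLetter G J m x) (hj : j ∈ J) :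
    NFLetter G J m (x * j) := by
  refine ⟨mul_mem hx.1 (hJ m hj), fun h => hx.2 ?_⟩
  · have : x = (x * j) * j⁻¹ := by group
    rw [this]; exact mul_mem h (inv_mem hj)

lemma NFLetter.mulJ_left (hJ : ∀ m, J ≤ G m) {m : Bool} {x j : Γ} (hx : NFLetter G J m x)
    (hj : j ∈ J) : NFLetter G J m (j * x) := by
  refine ⟨mul_mem (hJ m hj) hx.1, fun h => hx.2 ?_⟩
  have : x = j⁻¹ * (j * x) := by group
  rw [this]; exact mul_mem (inv_mem hj) h

lemma NFLetter.inv {m : Bool} {x : Γ} (hx : NFLetter G J m x) : NFLetter G J m x⁻¹ :=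
  ⟨inv_mem hx.1, fun h => hx.2 (by simpa using inv_mem h)⟩

lemma AltWord.absorbL (hJ : ∀ m, J ≤ G m) {m : Bool} {w : Γ} (h : AltWord G J m w)
    {j : Γ} (hj : j ∈ J) : AltWord G J m (j * w) := by
  induction h with
  | base hx => exact .base (hx.mulJ_left hJ hj)
  | step hw hx ih =>
      rw [← mul_assoc]
      exact .step hw (hx.mulJ_left hJ hj)

lemma AltWord.absorbR (hJ : ∀ m, J ≤ G m) {m : Bool} {w : Γ} (h : AltWord G J m w)
    {j : Γ} (hj : j ∈ J) : AltWord G J m (w * j) := by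
  induction h with
  | base hx => exact .base (hx.mulJ_right hJ hj)
  | step hw hx ih =>
      rw [mul_assoc]
      exact .step ih hx

lemma AltWord.mulLetterLeft (hJ : ∀ m, J ≤ G m) {c : Bool} {x : Γ}
    (hx : NFLetter G J c x) {m : Bool} {w : Γ} (hw : AltWord G J m w) :
    x * w ∈ J ∨ ∃ m', AltWord G J m' (x * w) := by
  induction hw with
  | @base m y hy =>
      by_cases hcm : c = m
      · subst hcm
        by_cases hxy : x * y ∈ J
        · exact Or.inl hxy
        · exact Or.inr ⟨c, .base ⟨mul_mem hx.1 hy.1, hxy⟩⟩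
      · have hc : c = !m := by cases c <;> cases m <;> simp_all
        subst hc
        exact Or.inr ⟨!m, .step (.base hy) hx⟩
  | @step m' w' z hw' hz ih =>
      -- word is z * w', of outer type !m'
      by_cases hcm : c = !m'
      · subst hcm
        by_cases hxz : x * z ∈ J
        · rw [← mul_assoc]
          exact Or.inr ⟨m', hw'.absorbL hJ hxz⟩
        · rw [← mul_assoc]
          exact Or.inr ⟨!m', .step hw' ⟨mul_mem hx.1 hz.1, hxz⟩⟩
      · have hc : c = !(!m') := by cases c <;> cases m' <;> simp_all
        subst hc
        exact Or.inr ⟨_, .step (.step hw' hz) hx⟩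

lemma AltWord.mulLetterRight (hJ : ∀ m, J ≤ G m) {m : Bool} {w : Γ}
    (hw : AltWord G J m w) {c : Bool} {y : Γ} (hy : NFLetter G J c y) :
    w * y ∈ J ∨ ∃ m', AltWord G J m' (w * y) := by
  induction hw with
  | @base m x hx =>
      by_cases hcm : c = m
      · subst hcm
        by_cases hxy : x * y ∈ J
        · exact Or.inl hxy
        · exact Or.inr ⟨c, .base ⟨mul_mem hx.1 hy.1, hxy⟩⟩
      · have hc : m = !c := by cases c <;> cases m <;> simp_all
        subst hc
        exact Or.inr ⟨!c, .step (.base hy) hx⟩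
  | @step m' w' x hw' hx ih =>
      rcases ih with hJ' | ⟨m'', hww⟩
      · rw [mul_assoc]
        exact Or.inr ⟨!m', .base (hx.mulJ_right hJ hJ')⟩
      · rcases hww.mulLetterLeft hJ hx with h | ⟨m₃, h⟩
        · rw [mul_assoc]; exact Or.inl h
        · rw [mul_assoc]; exact Or.inr ⟨m₃, h⟩

lemma AltWord.mulWords (hJ : ∀ m, J ≤ G m) {m : Bool} {a : Γ} (ha : AltWord G J m a)
    {m' : Bool} {b : Γ} (hb : AltWord G J m' b) :
    a * b ∈ J ∨ ∃ m'', AltWord G J m'' (a * b) := by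
  induction ha with
  | base hx => exact hb.mulLetterLeft hJ hx
  | @step mm w x hw hx ih =>
      rcases ih with hJ' | ⟨m₃, hww⟩
      · rw [mul_assoc]
        exact Or.inr ⟨!mm, .base (hx.mulJ_right hJ hJ')⟩
      · rcases hww.mulLetterLeft hJ hx with h | ⟨m₄, h⟩
        · rw [mul_assoc]; exact Or.inl h
        · rw [mul_assoc]; exact Or.inr ⟨m₄, h⟩

lemma AltWord.inv (hJ : ∀ m, J ≤ G m) {m : Bool} {w : Γ} (hw : AltWord G J m w) :
    w⁻¹ ∈ J ∨ ∃ m', AltWord G J m' w⁻¹ := by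
  induction hw with
  | @base m x hx => exact Or.inr ⟨m, .base hx.inv⟩
  | @step m' w' x hw' hx ih =>
      rw [mul_inv_rev]
      rcases ih with hJ' | ⟨m'', hww⟩
      · exact Or.inr ⟨!m', .base (hx.inv.mulJ_left hJ hJ')⟩
      · exact hww.mulLetterRight hJ hx.inv

end Aux

theorem stmt9 {Γ : Type*} [Group Γ] {Z : Type*} [MulAction Γ Z]
    (G : Bool → Subgroup Γ) (J : Subgroup Γ) (hJ : ∀ m, J ≤ G m)
    (B : Bool → Set Z) (hcover : B true ∪ B false = Set.univ)
    (S : Set Z) (hS : S = B true ∩ B false)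
    (X : Bool → Set Z) (hX : ∀ m, X m = (B (!m))ᶜ)
    (hinv : ∀ m, ∀ j ∈ J, j • B m = B m)
    (hmapB : ∀ m, ∀ g : Γ, NFLetter G J m g → g • B m ⊆ B (!m))
    (hmapX : ∀ m, ∀ g : Γ, NFLetter G J m g → g • X m ⊆ X (!m))
    (hprec : ∀ m, ∀ g : Γ, NFLetter G J m g → (g • S) ∩ S = ∅) :
    (∀ j ∈ J, j • S = S) ∧
      ∀ γ ∈ G true ⊔ G false, γ ∉ J → (γ • S) ∩ S = ∅ := by
  have hSsub : ∀ m, S ⊆ B m := by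
    intro m; rw [hS]; cases m
    · exact Set.inter_subset_right
    · exact Set.inter_subset_left
  -- ping-pong lemma
  have ping : ∀ m : Bool, ∀ w : Γ, AltWord G J m w → w • S ⊆ X (!m) ∩ B (!m) := by
    intro m w hw
    induction hw with
    | @base m x hx =>
        have hB : x • S ⊆ B (!m) :=
          (Set.smul_set_mono (hSsub m)).trans (hmapB m x hx)
        refine Set.subset_inter ?_ hB
        rw [hX]
        intro z hz
        simp only [Set.mem_compl_iff, Bool.not_not]
        intro hzBm
        have hzS : z ∈ S := by
          rw [hS]; cases m
          · exact ⟨hB hz, hzBm⟩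
          · exact ⟨hzBm, hB hz⟩
        have : z ∈ (x • S) ∩ S := ⟨hz, hzS⟩
        rw [hprec m x hx] at this
        exact this
    | @step m' w' x hw' hx ih =>
        rw [mul_smul]
        calc x • (w' • S) ⊆ x • (X (!m') ∩ B (!m')) := Set.smul_set_mono ih
          _ ⊆ X (!(!m')) ∩ B (!(!m')) := by
              rw [Set.smul_set_inter]
              exact Set.inter_subset_inter (hmapX (!m') x hx) (hmapB (!m') x hx)
  constructor
  · intro j hj
    rw [hS, Set.smul_set_inter, hinv true j hj, hinv false j hj]
  · intro γ hγ hγJ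
    have hmem : γ ∈ Subgroup.closure ((G true : Set Γ) ∪ (G false : Set Γ)) := by
      rwa [Subgroup.closure_union, Subgroup.closure_eq, Subgroup.closure_eq]
    have hP : γ ∈ J ∨ ∃ m, AltWord G J m γ := by
      refine Subgroup.closure_induction (k := (G true : Set Γ) ∪ (G false : Set Γ))
        (p := fun x _ => x ∈ J ∨ ∃ m, AltWord G J m x) ?_ ?_ ?_ ?_ hmem
      · rintro x (hx | hx)
        · by_cases hxJ : x ∈ J
          · exact Or.inl hxJ
          · exact Or.inr ⟨true, .base ⟨hx, hxJ⟩⟩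
        · by_cases hxJ : x ∈ J
          · exact Or.inl hxJ
          · exact Or.inr ⟨false, .base ⟨hx, hxJ⟩⟩
      · exact Or.inl J.one_mem
      · rintro a b _ _ (haJ | ⟨ma, ha⟩) (hbJ | ⟨mb, hb⟩)
        · exact Or.inl (mul_mem haJ hbJ)
        · exact Or.inr ⟨mb, hb.absorbL hJ haJ⟩
        · exact Or.inr ⟨ma, ha.absorbR hJ hbJ⟩
        · exact ha.mulWords hJ hb
      · rintro a _ (haJ | ⟨ma, ha⟩)
        · exact Or.inl (inv_mem haJ)
        · exact ha.inv hJ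
    rcases hP with hγJ' | ⟨m, hw⟩
    · exact absurd hγJ' hγJ
    · have h1 : γ • S ⊆ (B m)ᶜ := by
        have := (ping m γ hw).trans Set.inter_subset_left
        rwa [hX, Bool.not_not] at this
      rw [Set.eq_empty_iff_forall_notMem]
      rintro z ⟨hz1, hz2⟩
      exact h1 hz1 (hSsub m hz2)
end

section
/- Let Γ be a group acting on a set Z, G₁ and G₂ subgroups of Γ, and J a subgroup of G₁ ∩ G₂. Suppose (X₁, X₂) is a proper interactive pair for (G₁, G₂, J). Then for any k ∈ {1,2}, the value g = γ_n⋯γ_1 of any (3−k, k)-form (i.e. a normal form whose first letter γ_1 lies in G_k∖J and whose last letter γ_n lies in G_{3−k}∖J) has infinite order as an element of Γ. -/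
open Pointwise

namespace Stmt11Aux

def par (t : Bool) (n : ℕ) : Bool := if n % 2 = 1 then t else !t

theorem par_even {n : ℕ} (h : n % 2 = 0) (t : Bool) : par t n = !t := by
  simp [par, h]

theorem par_odd {n : ℕ} (h : n % 2 = 1) (t : Bool) : par t n = t := by
  simp [par, h]

theorem par_flip (t : Bool) (n : ℕ) : par (!t) n = !(par t n) := by
  unfold par; split_ifs <;> simp

theorem par_succ (t : Bool) (n : ℕ) : par t (n + 1) = !(par t n) := by
  rcases Nat.mod_two_eq_zero_or_one n with h | h
  · rw [par_even h, par_odd (by omega), Bool.not_not]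
  · rw [par_odd h, par_even (by omega)]

theorem par_mod_of_eq_not {t : Bool} {n : ℕ} (h : par t n = !t) : n % 2 = 0 := by
  rcases Nat.mod_two_eq_zero_or_one n with h0 | h1
  · exact h0
  · rw [par_odd h1] at h; cases t <;> simp_all

variable {Γ : Type*} [Group Γ] {Z : Type*} [MulAction Γ Z]

variable (G : Bool → Subgroup Γ) (J : Subgroup Γ)

/-- Strictly alternating word (from the head/top letter down), head factor `t`. -/
def Alt : List Γ → Bool → Prop
  | [], _ => True
  | a :: l, t => NFLetter G J t a ∧ Alt l (!t)

variable {G J}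

theorem alt_append : ∀ {w₁ : List Γ} {t : Bool} {w₂ : List Γ},
    Alt G J w₁ t → Alt G J w₂ (!(par t w₁.length)) → Alt G J (w₁ ++ w₂) t := by
  intro w₁
  induction w₁ with
  | nil =>
      intro t w₂ _ h2
      rw [List.length_nil, par_even rfl, Bool.not_not] at h2
      simpa using h2
  | cons a l ih =>
      intro t w₂ h1 h2
      rw [List.length_cons, par_succ, Bool.not_not] at h2
      refine ⟨h1.1, ih h1.2 ?_⟩
      rwa [par_flip, Bool.not_not]

theorem alt_getLast : ∀ {w : List Γ} (h : w ≠ []) {t : Bool}, Alt G J w t →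
    NFLetter G J (par t w.length) (w.getLast h)
  | [a], _, t, ha => by
      simpa [par_odd (show 1 % 2 = 1 from rfl)] using ha.1
  | a :: b :: l, _, t, ha => by
      have ih := alt_getLast (w := b :: l) (List.cons_ne_nil b l) ha.2
      rw [List.getLast_cons (List.cons_ne_nil b l)]
      rw [List.length_cons, par_succ]
      rwa [par_flip] at ih

theorem alt_dropLast : ∀ {w : List Γ} {t : Bool}, Alt G J w t → Alt G J w.dropLast t
  | [], _, _ => trivial
  | [_], _, _ => trivial
  | _ :: _ :: _, _, h => ⟨h.1, alt_dropLast h.2⟩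

theorem chain_alt : ∀ {w : List Γ} (h : w ≠ []) {k : Bool},
    w.Chain' (fun a b => ∀ m, NFLetter G J m b → NFLetter G J (!m) a) →
    NFLetter G J k (w.getLast h) → Alt G J w (par k w.length)
  | [a], _, k, _, hl => by
      refine ⟨?_, trivial⟩
      simpa [par_odd (show 1 % 2 = 1 from rfl)] using hl
  | a :: b :: l, _, k, hc, hl => by
      obtain ⟨hab, hc'⟩ := List.isChain_cons_cons.mp hc
      have hl' : NFLetter G J k ((b :: l).getLast (List.cons_ne_nil b l)) := by
        rwa [List.getLast_cons (List.cons_ne_nil b l)] at hl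
      have ih := chain_alt (List.cons_ne_nil b l) hc' hl'
      have hb : NFLetter G J (par k (b :: l).length) b := ih.1
      refine ⟨?_, ?_⟩
      · rw [List.length_cons, par_succ]
        exact hab _ hb
      · rw [List.length_cons, par_succ, Bool.not_not]
        exact ih

theorem chain_amb : ∀ {w : List Γ} (h : w ≠ []),
    w.Chain' (fun a b => ∀ m, NFLetter G J m b → NFLetter G J (!m) a) →
    (∀ mm, NFLetter G J mm (w.getLast h)) → ∀ a ∈ w, ∀ mm, NFLetter G J mm a
  | [a], _, _, hl => by
      intro x hx mm
      rcases List.mem_singleton.mp hx with rfl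
      exact hl mm
  | a :: b :: l, _, hc, hl => by
      obtain ⟨hab, hc'⟩ := List.isChain_cons_cons.mp hc
      have hl' : ∀ mm, NFLetter G J mm ((b :: l).getLast (List.cons_ne_nil b l)) := by
        intro mm
        have := hl mm
        rwa [List.getLast_cons (List.cons_ne_nil b l)] at this
      have ih := chain_amb (List.cons_ne_nil b l) hc' hl'
      intro x hx mm
      rcases List.mem_cons.mp hx with rfl | hx'
      · have := hab (!mm) (ih b List.mem_cons_self (!mm))
        rwa [Bool.not_not] at this
      · exact ih x hx' mm

theorem both_amb {c : Γ} {k : Bool} (h1 : NFLetter G J k c) (h2 : NFLetter G J (!k) c) :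
    ∀ mm, NFLetter G J mm c := by
  intro mm
  rcases (by cases mm <;> cases k <;> simp : mm = k ∨ mm = !k) with h | h
  · rwa [h]
  · rwa [h]

variable (X : Bool → Set Z)

theorem alt_smul (hact : ∀ m, ∀ g : Γ, NFLetter G J m g → g • X m ⊆ X (!m)) :
    ∀ {w : List Γ} {t : Bool}, Alt G J w t → w.prod • X (par t w.length) ⊆ X (!t)
  | [], t, _ => by
      rw [List.prod_nil, List.length_nil, par_even rfl, one_smul]
  | a :: l, t, h => by
      rw [List.prod_cons, List.length_cons, par_succ, mul_smul]
      have h1 : l.prod • X (par (!t) l.length) ⊆ X (!(!t)) := alt_smul hact h.2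
      rw [par_flip, Bool.not_not] at h1
      exact (Set.smul_set_mono h1).trans (hact t a h.1)

theorem amb_smul (hact : ∀ m, ∀ g : Γ, NFLetter G J m g → g • X m ⊆ X (!m)) :
    ∀ {u : List Γ}, (∀ a ∈ u, ∀ mm, NFLetter G J mm a) →
      ∀ s : Bool, ∃ s', u.prod • X s ⊆ X s'
  | [], _, s => ⟨s, by rw [List.prod_nil, one_smul]⟩
  | a :: l, h, s => by
      obtain ⟨s', hs'⟩ := amb_smul hact (fun b hb => h b (List.mem_cons_of_mem a hb)) s
      refine ⟨!s', ?_⟩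
      rw [List.prod_cons, mul_smul]
      exact (Set.smul_set_mono hs').trans (hact s' a (h a List.mem_cons_self s'))

/-- An even-length alternating word has no nontrivial power equal to 1. -/
theorem even_kill (hact : ∀ m, ∀ g : Γ, NFLetter G J m g → g • X m ⊆ X (!m))
    (m₀ : Bool) (x : Z) (hx : x ∈ X m₀) (hprop : ∀ g ∈ G (!m₀), x ∉ g • X (!m₀))
    {t : Bool} {v : List Γ} (hv : Alt G J v t) (hvne : v ≠ [])
    (hpar : par t v.length = !t) {m : ℕ} (hm : 0 < m) (h1 : v.prod ^ m = 1) : False := by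
  have hW : ∀ j : ℕ, ∃ Wl : List Γ,
      Alt G J Wl t ∧ Wl.prod = v.prod ^ j ∧ par t Wl.length = !t ∧ (0 < j → Wl ≠ []) := by
    intro j
    induction j with
    | zero =>
        exact ⟨[], trivial, by simp, par_even rfl t, fun h => absurd h (by norm_num)⟩
    | succ j ih =>
        obtain ⟨Wl, hW1, hW2, hW3, _⟩ := ih
        refine ⟨v ++ Wl, alt_append hv ?_, ?_, ?_, ?_⟩
        · rwa [hpar, Bool.not_not]
        · rw [List.prod_append, hW2, ← pow_succ']
        · rw [List.length_append]
          refine par_even ?_ t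
          have e1 := par_mod_of_eq_not hpar
          have e2 := par_mod_of_eq_not hW3
          omega
        · intro _
          simp [hvne]
  obtain ⟨Wl, hWalt, hWprod, hWpar, hWne⟩ := hW m
  replace hWne := hWne hm
  have hW1 : Wl.prod = 1 := by rw [hWprod, h1]
  cases Wl with
  | nil => exact hWne rfl
  | cons c V =>
    obtain ⟨hc, hV⟩ := hWalt
    by_cases hVnil : V = []
    · subst hVnil
      rw [List.prod_cons, List.prod_nil, mul_one] at hW1
      exact hc.2 (hW1 ▸ J.one_mem)
    · have hVprod : V.prod = c⁻¹ := by
        refine eq_inv_of_mul_eq_one_right ?_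
        rwa [List.prod_cons] at hW1
      have hparV : par t V.length = t := by
        rw [List.length_cons, par_succ] at hWpar
        exact Bool.not_inj hWpar
      by_cases ht : t = m₀
      · -- peel the bottom letter of Wl
        subst ht
        have hBL := alt_getLast (w := c :: V) (List.cons_ne_nil c V) ⟨hc, hV⟩
        rw [hWpar] at hBL
        have hsplit := List.dropLast_append_getLast (l := c :: V) (List.cons_ne_nil c V)
        have hDprod : (c :: V).dropLast.prod
            = ((c :: V).getLast (List.cons_ne_nil c V))⁻¹ := by
          refine eq_inv_of_mul_eq_one_left ?_
          have h2 : ((c :: V).dropLast ++ [(c :: V).getLast (List.cons_ne_nil c V)]).prod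
              = 1 := by rw [hsplit]; exact hW1
          rwa [List.prod_append, List.prod_cons, List.prod_nil, mul_one] at h2
        have hDlen : (c :: V).dropLast.length = V.length := by
          rw [List.length_dropLast, List.length_cons]
          omega
        have hsub := alt_smul X hact (alt_dropLast (w := c :: V) ⟨hc, hV⟩)
        rw [hDlen, hparV, hDprod] at hsub
        have hmem : ((c :: V).getLast (List.cons_ne_nil c V))⁻¹ • x ∈ X (!t) :=
          hsub (Set.smul_mem_smul_set hx)
        refine hprop _ hBL.1 ?_
        have h3 := Set.smul_mem_smul_set (a := (c :: V).getLast (List.cons_ne_nil c V)) hmem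
        rwa [smul_inv_smul] at h3
      · -- peel the top letter of Wl
        have ht' : t = !m₀ := by cases t <;> cases m₀ <;> simp_all
        have hsub := alt_smul X hact hV
        rw [par_flip, hparV, hVprod] at hsub
        rw [ht'] at hsub hc
        rw [Bool.not_not] at hsub
        have hmem : c⁻¹ • x ∈ X (!m₀) := hsub (Set.smul_mem_smul_set hx)
        refine hprop c hc.1 ?_
        have h3 := Set.smul_mem_smul_set (a := c) hmem
        rwa [smul_inv_smul] at h3

/-- A nonempty word all of whose letters are ambiguous has no nontrivial power equal to 1. -/
theorem amb_kill (hact : ∀ m, ∀ g : Γ, NFLetter G J m g → g • X m ⊆ X (!m))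
    (hdisj : Disjoint (X true) (X false))
    (m₀ : Bool) (x : Z) (hx : x ∈ X m₀) (hprop : ∀ g ∈ G (!m₀), x ∉ g • X (!m₀))
    {w : List Γ} (hwne : w ≠ []) (hamb : ∀ a ∈ w, ∀ mm, NFLetter G J mm a)
    {m : ℕ} (hm : 0 < m) (h1 : w.prod ^ m = 1) : False := by
  obtain ⟨m', rfl⟩ : ∃ m', m = m' + 1 := ⟨m - 1, by omega⟩
  have hpow : ∀ j : ℕ, ∃ s, w.prod ^ j • X m₀ ⊆ X s := by
    intro j
    induction j with
    | zero => exact ⟨m₀, by rw [pow_zero, one_smul]⟩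
    | succ j ih =>
        obtain ⟨s, hs⟩ := ih
        obtain ⟨s', hs'⟩ := amb_smul X hact hamb s
        refine ⟨s', ?_⟩
        rw [pow_succ', mul_smul]
        exact (Set.smul_set_mono hs).trans hs'
  cases w with
  | nil => exact hwne rfl
  | cons c u =>
    obtain ⟨s₁, hs₁⟩ := hpow m'
    obtain ⟨s₂, hs₂⟩ := amb_smul X hact
      (fun b hb => (by exact fun mm => hamb b (List.mem_cons_of_mem c hb) mm)) s₁
    have hR : (u.prod * (c :: u).prod ^ m') • X m₀ ⊆ X s₂ := by
      rw [mul_smul]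
      exact (Set.smul_set_mono hs₁).trans hs₂
    have hcR : c * (u.prod * (c :: u).prod ^ m') = 1 := by
      rw [← mul_assoc, ← List.prod_cons, ← pow_succ']
      exact h1
    have hy : (u.prod * (c :: u).prod ^ m') • x ∈ X s₂ := hR (Set.smul_mem_smul_set hx)
    have hxc : c • ((u.prod * (c :: u).prod ^ m') • x) = x := by
      rw [← mul_smul, hcR, one_smul]
    have hcamb := hamb c List.mem_cons_self
    by_cases hs : s₂ = !m₀
    · rw [hs] at hy
      refine hprop c (hcamb (!m₀)).1 ?_
      rw [← hxc]
      exact Set.smul_mem_smul_set hy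
    · have hs' : s₂ = m₀ := by cases s₂ <;> cases m₀ <;> simp_all
      rw [hs'] at hy
      have hxf : x ∈ X (!m₀) := by
        rw [← hxc]
        exact hact m₀ c (hcamb m₀) (Set.smul_mem_smul_set hy)
      cases m₀ with
      | true => exact Set.disjoint_left.mp hdisj hx (by simpa using hxf)
      | false => exact Set.disjoint_left.mp hdisj (by simpa using hxf) hx

end Stmt11Aux

open Stmt11Aux

theorem stmt11 {Γ : Type*} [Group Γ] {Z : Type*} [MulAction Γ Z]
    (G : Bool → Subgroup Γ) (J : Subgroup Γ) (hJ : ∀ m, J ≤ G m)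
    (X : Bool → Set Z) (hX : IsProperInteractivePair G J X) :
    ∀ (k : Bool) (w : List Γ), IsMKForm G J (!k) k w →
      ¬ IsOfFinOrder w.prod := by
  intro k w hw hfin
  obtain ⟨⟨hne, _hlet, hchain⟩, hne', hhead, hlast⟩ := hw
  obtain ⟨⟨_hXne, hXdisj, _hXinv, hact⟩, m₀, x, hx, hprop⟩ := hX
  obtain ⟨m, hm, hgm⟩ := isOfFinOrder_iff_pow_eq_one.mp hfin
  by_cases hamb : ∀ a ∈ w, ∀ mm, NFLetter G J mm a
  · exact amb_kill X hact hXdisj m₀ x hx hprop hne hamb hm hgm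
  · have halt := chain_alt hne hchain hlast
    rcases Nat.mod_two_eq_zero_or_one w.length with hev | hodd
    · rw [par_even hev] at halt
      exact even_kill X hact m₀ x hx hprop halt hne (par_even hev (!k)) hm hgm
    · rw [par_odd hodd] at halt
      cases w with
      | nil => exact hne rfl
      | cons c u =>
        obtain ⟨hc, hu⟩ := halt
        have hhc : NFLetter G J (!k) c := by simpa using hhead
        have hcamb := both_amb hc hhc
        cases u with
        | nil =>
            refine hamb ?_
            intro a ha mm
            rcases List.mem_singleton.mp ha with rfl
            exact hcamb mm
        | cons b u' =>
          have hu_ne : (b :: u') ≠ [] := List.cons_ne_nil b u'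
          have hBk : NFLetter G J k ((b :: u').getLast hu_ne) := by
            rwa [List.getLast_cons hu_ne] at hlast
          set B := (b :: u').getLast hu_ne with hBdef
          set M := (b :: u').dropLast with hMdef
          have hMalt : Stmt11Aux.Alt G J M (!k) := alt_dropLast hu
          have hup : (b :: u').prod = M.prod * B := by
            conv_lhs => rw [← List.dropLast_append_getLast hu_ne]
            rw [List.prod_append, List.prod_cons, List.prod_nil, mul_one]
          by_cases hdJ : B * c ∈ J
          · -- then the bottom letter is ambiguous, hence all letters are: contradiction
            have hBnot : NFLetter G J (!k) B := by
              refine ⟨?_, hBk.2⟩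
              have hBeq : B = (B * c) * c⁻¹ := by group
              rw [hBeq]
              exact mul_mem (hJ (!k) hdJ) (inv_mem (hhc.1))
            have hBamb := both_amb hBk hBnot
            refine hamb ?_
            refine chain_amb hne hchain ?_
            intro mm
            rw [List.getLast_cons hu_ne]
            exact hBamb mm
          · -- merge bottom and top letters into an even-length alternating word
            have hdk : NFLetter G J k (B * c) := ⟨mul_mem hBk.1 hc.1, hdJ⟩
            have hval : ((B * c) :: M).prod = B * (c :: b :: u').prod * B⁻¹ := by
              rw [List.prod_cons, List.prod_cons, hup]
              group
            have hpow1 : ((B * c) :: M).prod ^ m = 1 := by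
              rw [hval, conj_pow, hgm, mul_one, mul_inv_cancel]
            have hMlen : M.length + 1 = (b :: u').length := by
              rw [hMdef, List.length_dropLast]
              simp
            have hpar' : par k ((B * c) :: M).length = !k := by
              rw [List.length_cons]
              refine par_even ?_ k
              have : (c :: b :: u').length % 2 = 1 := hodd
              rw [List.length_cons] at this
              omega
            exact even_kill X hact m₀ x hx hprop
              (t := k) (v := (B * c) :: M) ⟨hdk, hMalt⟩ (List.cons_ne_nil _ _)
              hpar' hm hpow1
end

section
/- In PSL(2,ℂ) (the quotient of SL(2,ℂ) by its center {±I}), let J be the subgroup generated by the images of the integer matrices [[1,1],[0,1]] and [[0,1],[−1,0]], let g₁ be the image of the diagonal matrix diag(i, −i), let g₂ be the image of the matrix [[0,i],[i,0]], and set G₁ = ⟨J, g₁⟩ and G₂ = ⟨J, g₂⟩. Then: (a) g₁ ∉ J and g₂ ∉ J; (b) (g₁g₂)² = 1 in PSL(2,ℂ), so the sequence g₁, g₂, g₁, g₂ is a normal form for (G₁, G₂, J) whose value is the identity; and consequently (c) the canonical homomorphism from the amalgamated free product G₁ *_J G₂ to PSL(2,ℂ) induced by the inclusions of G₁ and G₂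 is not injective, i.e. ⟨G₁, G₂⟩ is not isomorphic to G₁ *_J G₂ via this map. -/
open Matrix
open scoped MatrixGroups

/-- The image in `PSL(2, ℂ)` of the matrix `[[1,1],[0,1]]`. -/
noncomputable def pslT : PSL(2, ℂ) :=
  QuotientGroup.mk (⟨!![1, 1; 0, 1], by norm_num [Matrix.det_fin_two_of]⟩ : SL(2, ℂ))

/-- The image in `PSL(2, ℂ)` of the matrix `[[0,1],[-1,0]]`. -/
noncomputable def pslS : PSL(2, ℂ) :=
  QuotientGroup.mk (⟨!![0, 1; -1, 0], by norm_num [Matrix.det_fin_two_of]⟩ : SL(2, ℂ))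

/-- The subgroup `J` of `PSL(2, ℂ)` generated by the images of `[[1,1],[0,1]]`
and `[[0,1],[-1,0]]`. -/
noncomputable def exJ : Subgroup PSL(2, ℂ) := Subgroup.closure {pslT, pslS}

/-- The image `g₁` in `PSL(2, ℂ)` of the matrix `diag(i, -i)`. -/
noncomputable def exg₁ : PSL(2, ℂ) :=
  QuotientGroup.mk (⟨!![Complex.I, 0; 0, -Complex.I],
    by norm_num [Matrix.det_fin_two_of, Complex.I_mul_I]⟩ : SL(2, ℂ))

/-- The image `g₂` in `PSL(2, ℂ)` of the matrix `[[0, i],[i, 0]]`. -/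
noncomputable def exg₂ : PSL(2, ℂ) :=
  QuotientGroup.mk (⟨!![0, Complex.I; Complex.I, 0],
    by norm_num [Matrix.det_fin_two_of, Complex.I_mul_I]⟩ : SL(2, ℂ))

/-- The family `m ↦ G_m` with `G₁ = ⟨J, g₁⟩` and `G₂ = ⟨J, g₂⟩`. -/
noncomputable def exG : Bool → Subgroup PSL(2, ℂ) := fun m =>
  if m then exJ ⊔ Subgroup.closure {exg₁} else exJ ⊔ Subgroup.closure {exg₂}

theorem exJ_le_exG : ∀ m, exJ ≤ exG m := by
  intro m; cases m <;> exact le_sup_left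


section AuxStmt13

open Monoid

/-- The canonical homomorphism from `SL(2, ℤ)` to `PSL(2, ℂ)`. -/
noncomputable def auxψ : SL(2, ℤ) →* PSL(2, ℂ) :=
  (QuotientGroup.mk' (Subgroup.center (SL(2, ℂ)))).comp
    (Matrix.SpecialLinearGroup.map (Int.castRingHom ℂ))

lemma aux_cast_ne (A : SL(2, ℤ)) (B : SL(2, ℂ)) (i j : Fin 2)
    (hB : (B : Matrix (Fin 2) (Fin 2) ℂ) i j = Complex.I)
    (h : auxψ A = QuotientGroup.mk B) : False := by
  rw [auxψ, MonoidHom.comp_apply, QuotientGroup.mk'_apply, QuotientGroup.eq] at h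
  rw [Matrix.SpecialLinearGroup.mem_center_iff] at h
  obtain ⟨r, hr, hscalar⟩ := h
  set Ac := (Matrix.SpecialLinearGroup.map (Int.castRingHom ℂ)) A with hAc
  have h2 : (Ac : Matrix (Fin 2) (Fin 2) ℂ) * Matrix.scalar (Fin 2) r
      = (B : Matrix (Fin 2) (Fin 2) ℂ) := by
    rw [hscalar, Matrix.SpecialLinearGroup.coe_mul, ← Matrix.mul_assoc,
      ← Matrix.SpecialLinearGroup.coe_mul, mul_inv_cancel]
    simp
  have h3 : (Ac : Matrix (Fin 2) (Fin 2) ℂ) i j * r = Complex.I := by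
    rw [← hB, ← h2]
    simp [Matrix.scalar, Matrix.mul_diagonal]
  have h4 : ((A : Matrix (Fin 2) (Fin 2) ℤ) i j : ℂ) * r = Complex.I := by
    rw [← h3, hAc, Matrix.SpecialLinearGroup.map_apply_coe]
    simp
  have h5 : (((A : Matrix (Fin 2) (Fin 2) ℤ) i j : ℂ)) ^ 2 = -1 := by
    have := congrArg (· ^ 2) h4
    simp only [Fintype.card_fin] at hr
    simpa [mul_pow, hr, Complex.I_sq] using this
  have h6 : (((A : Matrix (Fin 2) (Fin 2) ℤ) i j) ^ 2 : ℤ) = -1 := by exact_mod_cast h5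
  nlinarith [sq_nonneg ((A : Matrix (Fin 2) (Fin 2) ℤ) i j)]

noncomputable def auxSl₁ : SL(2, ℂ) :=
  ⟨!![Complex.I, 0; 0, -Complex.I], by norm_num [Matrix.det_fin_two_of, Complex.I_mul_I]⟩

noncomputable def auxSlS : SL(2, ℂ) :=
  ⟨!![0, 1; -1, 0], by norm_num [Matrix.det_fin_two_of]⟩

noncomputable def auxSl₂ : SL(2, ℂ) :=
  ⟨!![0, Complex.I; Complex.I, 0], by norm_num [Matrix.det_fin_two_of, Complex.I_mul_I]⟩

lemma aux_g1_eq : exg₁ = QuotientGroup.mk auxSl₁ := rfl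
lemma aux_g2_eq : exg₂ = QuotientGroup.mk auxSl₂ := rfl
lemma aux_S_eq : pslS = QuotientGroup.mk auxSlS := rfl

lemma aux_mul12 : auxSl₁ * auxSlS = auxSl₂ := by
  ext i j
  rw [Matrix.SpecialLinearGroup.coe_mul]
  fin_cases i <;> fin_cases j <;>
    simp [auxSl₁, auxSlS, auxSl₂, Matrix.mul_apply, Fin.sum_univ_two]

lemma aux_sq : (auxSl₁ * auxSl₂) * (auxSl₁ * auxSl₂) = -1 := by
  ext i j
  simp only [Matrix.SpecialLinearGroup.coe_mul]
  fin_cases i <;> fin_cases j <;>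
    simp [auxSl₁, auxSl₂, Matrix.mul_apply, Fin.sum_univ_two]

lemma aux_T_mem : pslT ∈ auxψ.range := by
  refine ⟨⟨!![1, 1; 0, 1], by norm_num [Matrix.det_fin_two_of]⟩, ?_⟩
  show QuotientGroup.mk _ = QuotientGroup.mk _
  congr 1
  ext i j
  erw [Matrix.SpecialLinearGroup.map_apply_coe]
  fin_cases i <;> fin_cases j <;>
    simp [Matrix.SpecialLinearGroup.map_apply_coe]

lemma aux_S_mem : pslS ∈ auxψ.range := by
  refine ⟨⟨!![0, 1; -1, 0], by norm_num [Matrix.det_fin_two_of]⟩, ?_⟩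
  show QuotientGroup.mk _ = QuotientGroup.mk _
  congr 1
  ext i j
  erw [Matrix.SpecialLinearGroup.map_apply_coe]
  fin_cases i <;> fin_cases j <;>
    simp [Matrix.SpecialLinearGroup.map_apply_coe]

lemma aux_exJ_le : exJ ≤ auxψ.range := by
  rw [exJ, Subgroup.closure_le]
  rintro x (rfl | rfl)
  · exact aux_T_mem
  · exact aux_S_mem

lemma aux_g1_not_mem : exg₁ ∉ exJ := by
  intro h
  obtain ⟨A, hA⟩ := aux_exJ_le h
  exact aux_cast_ne A auxSl₁ 0 0 (by simp [auxSl₁]) (hA.trans aux_g1_eq)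

lemma aux_g2_not_mem : exg₂ ∉ exJ := by
  intro h
  obtain ⟨A, hA⟩ := aux_exJ_le h
  exact aux_cast_ne A auxSl₂ 0 1 (by simp [auxSl₂]) (hA.trans aux_g2_eq)

lemma aux_g2_eq_g1_S : exg₂ = exg₁ * pslS := by
  rw [aux_g1_eq, aux_g2_eq, aux_S_eq, ← QuotientGroup.mk_mul, aux_mul12]

lemma aux_prod_sq : (exg₁ * exg₂) ^ 2 = 1 := by
  rw [sq, aux_g1_eq, aux_g2_eq, ← QuotientGroup.mk_mul, ← QuotientGroup.mk_mul,
    QuotientGroup.eq_one_iff, aux_sq,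
    Matrix.SpecialLinearGroup.mem_center_iff]
  refine ⟨-1, by norm_num, ?_⟩
  ext i j
  fin_cases i <;> fin_cases j <;> simp [Matrix.diagonal]

lemma aux_S_in_J : pslS ∈ exJ := Subgroup.subset_closure (by simp)

lemma aux_exG_true : exG true = exJ ⊔ Subgroup.closure {exg₁} := rfl
lemma aux_exG_false : exG false = exJ ⊔ Subgroup.closure {exg₂} := rfl

lemma aux_g1_mem_true : exg₁ ∈ exG true := by
  rw [aux_exG_true]
  exact Subgroup.mem_sup_right (Subgroup.subset_closure rfl)

lemma aux_g2_mem_false : exg₂ ∈ exG false := by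
  rw [aux_exG_false]
  exact Subgroup.mem_sup_right (Subgroup.subset_closure rfl)

lemma aux_g2_mem_true : exg₂ ∈ exG true := by
  rw [aux_g2_eq_g1_S]
  exact mul_mem aux_g1_mem_true (exJ_le_exG true aux_S_in_J)

lemma aux_g1_mem_false : exg₁ ∈ exG false := by
  have : exg₁ = exg₂ * pslS⁻¹ := by rw [aux_g2_eq_g1_S, mul_inv_cancel_right]
  rw [this]
  exact mul_mem aux_g2_mem_false (inv_mem (exJ_le_exG false aux_S_in_J))

lemma aux_key {Γ : Type*} [Group Γ] (G : Bool → Subgroup Γ) (J : Subgroup Γ)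
    (hJ : ∀ m, J ≤ G m) (g₁ g₂ : Γ) (h1t : g₁ ∈ G true) (h2f : g₂ ∈ G false)
    (h1J : g₁ ∉ J) (h2J : g₂ ∉ J)
    (hprod : g₁ * g₂ * g₁ * g₂ = 1) :
    ¬ Function.Injective (amalgHom G J hJ) := by
  intro hinj
  set φ := fun m => Subgroup.inclusion (hJ m) with hφ
  have hφinj : ∀ m, Function.Injective (φ m) := fun m => Subgroup.inclusion_injective _
  set a : G true := ⟨g₁, h1t⟩ with ha
  set b : G false := ⟨g₂, h2f⟩ with hb
  have ha1 : a ≠ 1 := by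
    intro h; apply h1J; have : g₁ = 1 := congrArg Subtype.val h; rw [this]; exact J.one_mem
  have hb1 : b ≠ 1 := by
    intro h; apply h2J; have : g₂ = 1 := congrArg Subtype.val h; rw [this]; exact J.one_mem
  set L : List (Σ m : Bool, ↥(G m)) := [⟨true, a⟩, ⟨false, b⟩, ⟨true, a⟩, ⟨false, b⟩] with hL
  have hLne : ∀ l ∈ L, Sigma.snd l ≠ 1 := by
    intro l hl
    simp only [hL, List.mem_cons, List.not_mem_nil, or_false] at hl
    rcases hl with rfl | rfl | rfl | rfl
    · exact ha1
    · exact hb1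
    · exact ha1
    · exact hb1
  have hLch : L.Chain' fun l l' => Sigma.fst l ≠ Sigma.fst l' := by simp [hL, List.Chain']
  set w : CoprodI.Word (fun m => ↥(G m)) := ⟨L, hLne, hLch⟩ with hw
  have hred : PushoutI.Reduced φ w := by
    intro g hg
    simp only [hw, hL, List.mem_cons, List.not_mem_nil, or_false] at hg
    rcases hg with rfl | rfl | rfl | rfl
    · rintro ⟨y, hy⟩
      have h' : (y : Γ) = g₁ := congrArg Subtype.val hy
      exact h1J (h' ▸ y.2)
    · rintro ⟨y, hy⟩
      have h' : (y : Γ) = g₂ := congrArg Subtype.val hy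
      exact h2J (h' ▸ y.2)
    · rintro ⟨y, hy⟩
      have h' : (y : Γ) = g₁ := congrArg Subtype.val hy
      exact h1J (h' ▸ y.2)
    · rintro ⟨y, hy⟩
      have h' : (y : Γ) = g₂ := congrArg Subtype.val hy
      exact h2J (h' ▸ y.2)
  have hwprod : PushoutI.ofCoprodI (φ := φ) w.prod =
      PushoutI.of (φ := φ) true a * PushoutI.of (φ := φ) false b *
      (PushoutI.of (φ := φ) true a * PushoutI.of (φ := φ) false b) := by
    show PushoutI.ofCoprodI (φ := φ)
      ((List.map (fun l => CoprodI.of l.snd) L).prod) = _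
    simp [hL, mul_assoc]
  have hx : amalgHom G J hJ (PushoutI.ofCoprodI (φ := φ) w.prod) = 1 := by
    rw [hwprod]
    simp only [_root_.map_mul, amalgHom, PushoutI.lift_of, Subgroup.coe_subtype]
    show g₁ * g₂ * (g₁ * g₂) = 1
    rw [← mul_assoc]; exact hprod
  have hx1 : PushoutI.ofCoprodI (φ := φ) w.prod = 1 := by
    apply hinj; rw [hx, _root_.map_one]
  have hemp := hred.eq_empty_of_mem_range hφinj (by rw [hx1]; exact one_mem _)
  have : L = [] := congrArg CoprodI.Word.toList hemp
  simp [hL] at this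

end AuxStmt13

theorem stmt13 :
    (exg₁ ∉ exJ ∧ exg₂ ∉ exJ) ∧
    ((exg₁ * exg₂) ^ 2 = 1 ∧
      IsNormalForm exG exJ [exg₁, exg₂, exg₁, exg₂] ∧
      ([exg₁, exg₂, exg₁, exg₂] : List PSL(2, ℂ)).prod = 1) ∧
    ¬ Function.Injective (amalgHom exG exJ exJ_le_exG) := by
  have hprod4 : exg₁ * exg₂ * exg₁ * exg₂ = 1 := by
    have := aux_prod_sq
    rw [sq] at this
    rw [mul_assoc, mul_assoc, ← mul_assoc exg₂]
    rw [mul_assoc] at this ⊢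
    exact this
  refine ⟨⟨aux_g1_not_mem, aux_g2_not_mem⟩, ⟨aux_prod_sq, ⟨?_, ?_, ?_⟩, ?_⟩, ?_⟩
  · simp
  · intro x hx
    simp only [List.mem_cons, List.not_mem_nil, or_false] at hx
    rcases hx with rfl | rfl | rfl | rfl
    · exact Or.inl ⟨aux_g1_mem_true, aux_g1_not_mem⟩
    · exact Or.inl ⟨aux_g2_mem_true, aux_g2_not_mem⟩
    · exact Or.inl ⟨aux_g1_mem_true, aux_g1_not_mem⟩
    · exact Or.inl ⟨aux_g2_mem_true, aux_g2_not_mem⟩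
  · have hP : ∀ x y : PSL(2, ℂ), x ∈ exG true → x ∈ exG false → x ∉ exJ →
        (∀ m, NFLetter exG exJ m y → NFLetter exG exJ (!m) x) := by
      intro x y hxt hxf hxJ m _
      cases m
      · exact ⟨hxt, hxJ⟩
      · exact ⟨hxf, hxJ⟩
    refine List.IsChain.cons_cons ?_ (List.IsChain.cons_cons ?_ (List.IsChain.cons_cons ?_ (List.isChain_singleton _)))
    · exact hP _ _ aux_g1_mem_true aux_g1_mem_false aux_g1_not_mem
    · exact hP _ _ aux_g2_mem_true aux_g2_mem_false aux_g2_not_mem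
    · exact hP _ _ aux_g1_mem_true aux_g1_mem_false aux_g1_not_mem
  · simp only [List.prod_cons, List.prod_nil, mul_one]
    rw [← mul_assoc, ← mul_assoc]
    exact hprod4
  · exact aux_key exG exJ exJ_le_exG exg₁ exg₂ aux_g1_mem_true aux_g2_mem_false
      aux_g1_not_mem aux_g2_not_mem hprod4
end
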